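/- arXiv:2007.14654 — 9 statements merged into one kernel-verified Lean document; each statement's English description precedes it below -/
import Mathlib

section
/- Let D^x ⊆ ℝ^n be open and let D^z ⊆ ℝ^s be open and symmetric (i.e., z ∈ D^z implies Σz ∈ D^z for every diagonal matrix Σ with diagonal entries in {−1,0,1}). Let cE : D^x × D^z → ℝ^{m₁}, cI : D^x × D^z → ℝ^{m₂}, cZ : D^x × D^z → ℝ^s be continuous. Define F_abs = {(x,z) ∈ D^x × D^z : cE(x,|z|) = 0, cI(x,|z|) ≥ 0, cZ(x,|z|) = z} and F_mpcc = {(x,u,v) ∈ D^x × ℝ^s × ℝ^s : u+v ∈ D^z, u ≥ 0, v ≥ 0, uᵢvᵢ = 0 for all i, cE(x,u+v) = 0, cI(x,u+v) ≥ 0, cZ(x,u+v) = u−v}. Then the map φ(x,u,v) = (x, u−v) is a homeomorphism from F_mpcc onto F_abs with inverse φ⁻¹(x,z) = (x, [z]⁺, [z]⁻). -/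
/-- componentwise positive part -/
def posPart' {s : ℕ} (z : Fin s → ℝ) : Fin s → ℝ := fun i => max (z i) 0

/-- componentwise negative part -/
def negPart' {s : ℕ} (z : Fin s → ℝ) : Fin s → ℝ := fun i => max (-z i) 0

/-- componentwise absolute value -/
def vabs {s : ℕ} (z : Fin s → ℝ) : Fin s → ℝ := fun i => |z i|

/-- Feasible set of the abs-normal NLP. -/
def Fabs {n s m₁ m₂ : ℕ} (Dx : Set (Fin n → ℝ)) (Dz : Set (Fin s → ℝ))
    (cE : (Fin n → ℝ) × (Fin s → ℝ) → Fin m₁ → ℝ)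
    (cI : (Fin n → ℝ) × (Fin s → ℝ) → Fin m₂ → ℝ)
    (cZ : (Fin n → ℝ) × (Fin s → ℝ) → Fin s → ℝ) :
    Set ((Fin n → ℝ) × (Fin s → ℝ)) :=
  {p | p.1 ∈ Dx ∧ p.2 ∈ Dz ∧ cE (p.1, vabs p.2) = 0 ∧
    (∀ j, 0 ≤ cI (p.1, vabs p.2) j) ∧ cZ (p.1, vabs p.2) = p.2}

/-- Feasible set of the counterpart MPCC. -/
def Fmpcc {n s m₁ m₂ : ℕ} (Dx : Set (Fin n → ℝ)) (Dz : Set (Fin s → ℝ))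
    (cE : (Fin n → ℝ) × (Fin s → ℝ) → Fin m₁ → ℝ)
    (cI : (Fin n → ℝ) × (Fin s → ℝ) → Fin m₂ → ℝ)
    (cZ : (Fin n → ℝ) × (Fin s → ℝ) → Fin s → ℝ) :
    Set ((Fin n → ℝ) × (Fin s → ℝ) × (Fin s → ℝ)) :=
  {q | q.1 ∈ Dx ∧ q.2.1 + q.2.2 ∈ Dz ∧ (∀ i, 0 ≤ q.2.1 i) ∧ (∀ i, 0 ≤ q.2.2 i) ∧
    (∀ i, q.2.1 i * q.2.2 i = 0) ∧ cE (q.1, q.2.1 + q.2.2) = 0 ∧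
    (∀ j, 0 ≤ cI (q.1, q.2.1 + q.2.2) j) ∧ cZ (q.1, q.2.1 + q.2.2) = q.2.1 - q.2.2}

/-- The map `φ(x,u,v) = (x, u - v)` is a homeomorphism from the MPCC feasible set
onto the abs-normal feasible set, with inverse `φ⁻¹(x,z) = (x, [z]⁺, [z]⁻)`. -/
theorem stmt1 {n s m₁ m₂ : ℕ}
    (Dx : Set (Fin n → ℝ)) (Dz : Set (Fin s → ℝ))
    (hDx : IsOpen Dx) (hDz : IsOpen Dz)
    (hsym : ∀ z ∈ Dz, ∀ σ : Fin s → ℝ, (∀ i, σ i = -1 ∨ σ i = 0 ∨ σ i = 1) →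
      (fun i => σ i * z i) ∈ Dz)
    (cE : (Fin n → ℝ) × (Fin s → ℝ) → Fin m₁ → ℝ)
    (cI : (Fin n → ℝ) × (Fin s → ℝ) → Fin m₂ → ℝ)
    (cZ : (Fin n → ℝ) × (Fin s → ℝ) → Fin s → ℝ)
    (hcE : ContinuousOn cE (Dx ×ˢ Dz))
    (hcI : ContinuousOn cI (Dx ×ˢ Dz))
    (hcZ : ContinuousOn cZ (Dx ×ˢ Dz)) :
    ∃ h : Fmpcc Dx Dz cE cI cZ ≃ₜ Fabs Dx Dz cE cI cZ,
      (∀ q : Fmpcc Dx Dz cE cI cZ,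
        (h q : (Fin n → ℝ) × (Fin s → ℝ)) =
          ((q : (Fin n → ℝ) × (Fin s → ℝ) × (Fin s → ℝ)).1,
           (q : (Fin n → ℝ) × (Fin s → ℝ) × (Fin s → ℝ)).2.1 -
           (q : (Fin n → ℝ) × (Fin s → ℝ) × (Fin s → ℝ)).2.2)) ∧
      (∀ p : Fabs Dx Dz cE cI cZ,
        (h.symm p : (Fin n → ℝ) × (Fin s → ℝ) × (Fin s → ℝ)) =
          ((p : (Fin n → ℝ) × (Fin s → ℝ)).1,
           posPart' (p : (Fin n → ℝ) × (Fin s → ℝ)).2,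
           negPart' (p : (Fin n → ℝ) × (Fin s → ℝ)).2)) := by

  classical
  have key1 : ∀ q ∈ Fmpcc Dx Dz cE cI cZ,
      (q.1, q.2.1 - q.2.2) ∈ Fabs Dx Dz cE cI cZ := by
    rintro ⟨x, u, v⟩ ⟨hx, hz, hu, hv, huv, hE, hI, hZ⟩
    have habs : vabs (u - v) = u + v := by
      funext i
      show |u i - v i| = u i + v i
      rcases mul_eq_zero.mp (huv i) with h | h
      · have h : u i = 0 := h
        rw [show u i - v i = -(v i) by rw [h]; ring, abs_neg,
          abs_of_nonneg (hv i), h, zero_add]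
      · have h : v i = 0 := h
        rw [h, sub_zero, abs_of_nonneg (hu i), add_zero]
    refine ⟨hx, ?_, by simpa [habs] using hE, by simpa [habs] using hI,
      by simpa [habs] using hZ⟩
    have := hsym _ hz (fun i => if v i = 0 then 1 else -1) (fun i => by
      by_cases h : v i = 0 <;> simp [h])
    have heq : (fun i => (if v i = 0 then (1:ℝ) else -1) * (u + v) i) = u - v := by
      funext i
      by_cases h : v i = 0
      · simp [h]
      · have hu0 : u i = 0 := by rcases mul_eq_zero.mp (huv i) with h' | h' <;> tauto
        simp [h, hu0]
    rwa [heq] at this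
  have key2 : ∀ p ∈ Fabs Dx Dz cE cI cZ,
      (p.1, posPart' p.2, negPart' p.2) ∈ Fmpcc Dx Dz cE cI cZ := by
    rintro ⟨x, z⟩ ⟨hx, hz, hE, hI, hZ⟩
    have hsum : posPart' z + negPart' z = vabs z := by
      funext i
      rcases le_total (z i) 0 with h | h
      · simp [posPart', negPart', vabs, max_eq_right h,
          max_eq_left (by linarith : (0:ℝ) ≤ -z i), abs_of_nonpos h]
      · simp [posPart', negPart', vabs, max_eq_left h,
          max_eq_right (by linarith : -z i ≤ 0), abs_of_nonneg h]
    have hsub : posPart' z - negPart' z = z := by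
      funext i
      simp only [posPart', negPart', Pi.sub_apply]
      rcases le_total (z i) 0 with h | h
      · rw [max_eq_right h, max_eq_left (by linarith : (0:ℝ) ≤ -z i)]; ring
      · rw [max_eq_left h, max_eq_right (by linarith : -z i ≤ 0)]; ring
    have hmem : posPart' z + negPart' z ∈ Dz := by
      have := hsym _ hz (fun i => if z i < 0 then -1 else 1) (fun i => by
        by_cases h : z i < 0 <;> simp [h])
      have heq : (fun i => (if z i < 0 then (-1:ℝ) else 1) * z i) = vabs z := by
        funext i
        by_cases h : z i < 0
        · simp [h, vabs, abs_of_neg h]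
        · simp [h, vabs, abs_of_nonneg (not_lt.mp h)]
      rw [hsum, ← heq]; exact this
    exact ⟨hx, hmem, fun i => le_max_right _ _, fun i => le_max_right _ _,
      fun i => by
        rcases le_total (z i) 0 with h | h
        · simp [posPart', negPart', max_eq_right h]
        · simp [posPart', negPart', max_eq_right (by linarith : -z i ≤ 0)],
      by rw [hsum]; exact hE, by rw [hsum]; exact hI, by rw [hsum, hsub]; exact hZ⟩
  have hleft : ∀ q ∈ Fmpcc Dx Dz cE cI cZ,
      posPart' (q.2.1 - q.2.2) = q.2.1 ∧ negPart' (q.2.1 - q.2.2) = q.2.2 := by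
    rintro ⟨x, u, v⟩ ⟨hx, hz, hu, hv, huv, _⟩
    constructor
    · funext i
      show max (u i - v i) 0 = u i
      rcases mul_eq_zero.mp (huv i) with h | h
      · have h : u i = 0 := h
        rw [h, zero_sub, max_eq_right (neg_nonpos.mpr (hv i))]
      · have h : v i = 0 := h
        rw [h, sub_zero, max_eq_left (hu i)]
    · funext i
      show max (-(u i - v i)) 0 = v i
      rw [neg_sub]
      rcases mul_eq_zero.mp (huv i) with h | h
      · have h : u i = 0 := h
        rw [h, sub_zero, max_eq_left (hv i)]
      · have h : v i = 0 := h
        rw [h, zero_sub, max_eq_right (neg_nonpos.mpr (hu i))]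
  have hright : ∀ z : Fin s → ℝ, posPart' z - negPart' z = z := by
    intro z
    funext i
    simp only [posPart', negPart', Pi.sub_apply]
    rcases le_total (z i) 0 with h | h
    · rw [max_eq_right h, max_eq_left (by linarith : (0:ℝ) ≤ -z i)]; ring
    · rw [max_eq_left h, max_eq_right (by linarith : -z i ≤ 0)]; ring
  refine ⟨{ toFun := fun q => ⟨(q.1.1, q.1.2.1 - q.1.2.2), key1 q.1 q.2⟩
            invFun := fun p => ⟨(p.1.1, posPart' p.1.2, negPart' p.1.2), key2 p.1 p.2⟩
            left_inv := ?_
            right_inv := ?_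
            continuous_toFun := ?_
            continuous_invFun := ?_ }, fun q => rfl, fun p => rfl⟩
  · rintro ⟨⟨x, u, v⟩, hq⟩
    obtain ⟨h1, h2⟩ := hleft _ hq
    simp [Subtype.ext_iff, Prod.ext_iff, h1, h2]
  · rintro ⟨⟨x, z⟩, hp⟩
    simp [Subtype.ext_iff, Prod.ext_iff, hright z]
  · apply Continuous.subtype_mk
    exact ((continuous_subtype_val.fst).prodMk
      ((continuous_subtype_val.snd.fst).sub (continuous_subtype_val.snd.snd)))
  · apply Continuous.subtype_mk
    have hpos : Continuous (fun z : Fin s → ℝ => posPart' z) :=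
      continuous_pi fun i => (continuous_apply i).max continuous_const
    have hneg : Continuous (fun z : Fin s → ℝ => negPart' z) :=
      continuous_pi fun i => (continuous_apply i).neg.max continuous_const
    exact (continuous_subtype_val.fst).prodMk
      ((hpos.comp continuous_subtype_val.snd).prodMk
        (hneg.comp continuous_subtype_val.snd))
end

section
/- Let D^t ⊆ ℝ^n be open and let D^z ⊆ ℝ^s be open and symmetric (i.e., z ∈ D^z implies Σz ∈ D^z for every diagonal matrix Σ with diagonal entries in {−1,0,1}). Let cE : D^t × D^z → ℝ^{m₁}, cI : D^t × D^z → ℝ^{m₂}, cZ : D^t × D^z → ℝ^s be continuous. Define F_eabs = {(t,w,zᵗ,z^w) ∈ D^t × ℝ^{m₂} × D^z × ℝ^{m₂} : cE(t,|zᵗ|) = 0, cI(t,|zᵗ|) − |z^w| = 0, cZ(t,|zᵗ|) − zᵗ = 0, w − z^w = 0} and F_empcc = {(t,w,uᵗ,vᵗ,u^w,v^w) : t ∈ D^t, w ∈ ℝ^{m₂}, uᵗ+vᵗ ∈ D^z, uᵗ,vᵗ ≥ 0, uᵗᵢvᵗᵢ = 0 for all i, u^w,v^w ≥ 0, u^wᵢv^wᵢ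 = 0 for all i, cE(t,uᵗ+vᵗ) = 0, cI(t,uᵗ+vᵗ) − (u^w+v^w) = 0, cZ(t,uᵗ+vᵗ) − (uᵗ−vᵗ) = 0, w − (u^w−v^w) = 0}. Then the map φ̄(t,w,uᵗ,vᵗ,u^w,v^w) = (t, w, uᵗ−vᵗ, u^w−v^w) is a homeomorphism from F_empcc onto F_eabs with inverse φ̄⁻¹(t,w,zᵗ,z^w) = (t, w, [zᵗ]⁺, [zᵗ]⁻, [z^w]⁺, [z^w]⁻). -/
/-- Feasible set of the abs-normal NLP with inequality slacks:
points `(t, w, zᵗ, z^w)`. -/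
def Feabs {n s m₁ m₂ : ℕ} (Dt : Set (Fin n → ℝ)) (Dz : Set (Fin s → ℝ))
    (cE : (Fin n → ℝ) × (Fin s → ℝ) → Fin m₁ → ℝ)
    (cI : (Fin n → ℝ) × (Fin s → ℝ) → Fin m₂ → ℝ)
    (cZ : (Fin n → ℝ) × (Fin s → ℝ) → Fin s → ℝ) :
    Set ((Fin n → ℝ) × (Fin m₂ → ℝ) × (Fin s → ℝ) × (Fin m₂ → ℝ)) :=
  {p | p.1 ∈ Dt ∧ p.2.2.1 ∈ Dz ∧
    cE (p.1, vabs p.2.2.1) = 0 ∧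
    cI (p.1, vabs p.2.2.1) - vabs p.2.2.2 = 0 ∧
    cZ (p.1, vabs p.2.2.1) - p.2.2.1 = 0 ∧
    p.2.1 - p.2.2.2 = 0}

/-- Feasible set of the counterpart MPCC of the slack reformulation:
points `(t, w, uᵗ, vᵗ, u^w, v^w)`. -/
def Fempcc {n s m₁ m₂ : ℕ} (Dt : Set (Fin n → ℝ)) (Dz : Set (Fin s → ℝ))
    (cE : (Fin n → ℝ) × (Fin s → ℝ) → Fin m₁ → ℝ)
    (cI : (Fin n → ℝ) × (Fin s → ℝ) → Fin m₂ → ℝ)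
    (cZ : (Fin n → ℝ) × (Fin s → ℝ) → Fin s → ℝ) :
    Set ((Fin n → ℝ) × (Fin m₂ → ℝ) × (Fin s → ℝ) × (Fin s → ℝ) ×
      (Fin m₂ → ℝ) × (Fin m₂ → ℝ)) :=
  {q | q.1 ∈ Dt ∧ q.2.2.1 + q.2.2.2.1 ∈ Dz ∧
    (∀ i, 0 ≤ q.2.2.1 i) ∧ (∀ i, 0 ≤ q.2.2.2.1 i) ∧
    (∀ i, q.2.2.1 i * q.2.2.2.1 i = 0) ∧
    (∀ i, 0 ≤ q.2.2.2.2.1 i) ∧ (∀ i, 0 ≤ q.2.2.2.2.2 i) ∧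
    (∀ i, q.2.2.2.2.1 i * q.2.2.2.2.2 i = 0) ∧
    cE (q.1, q.2.2.1 + q.2.2.2.1) = 0 ∧
    cI (q.1, q.2.2.1 + q.2.2.2.1) - (q.2.2.2.2.1 + q.2.2.2.2.2) = 0 ∧
    cZ (q.1, q.2.2.1 + q.2.2.2.1) - (q.2.2.1 - q.2.2.2.1) = 0 ∧
    q.2.1 - (q.2.2.2.2.1 - q.2.2.2.2.2) = 0}

lemma pp_sub (a b : ℝ) (ha : 0 ≤ a) (hb : 0 ≤ b) (h : a * b = 0) :
    max (a - b) 0 = a := by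
  rcases mul_eq_zero.1 h with h | h <;> subst h <;> simp [max_eq_left, max_eq_right, ha, hb, neg_nonpos.2 hb, sub_nonpos]

lemma np_sub (a b : ℝ) (ha : 0 ≤ a) (hb : 0 ≤ b) (h : a * b = 0) :
    max (-(a - b)) 0 = b := by
  rcases mul_eq_zero.1 h with h | h <;> subst h <;> simp [max_eq_left, max_eq_right, ha, hb, neg_nonpos.2 ha]

lemma abs_sub_of_mul_zero (a b : ℝ) (ha : 0 ≤ a) (hb : 0 ≤ b) (h : a * b = 0) :
    |a - b| = a + b := by
  rcases mul_eq_zero.1 h with h | h <;> subst h <;> simp [abs_of_nonneg, abs_of_nonpos, ha, hb, neg_nonpos.2 hb]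

lemma vabs_sub {s : ℕ} (u v : Fin s → ℝ) (hu : ∀ i, 0 ≤ u i) (hv : ∀ i, 0 ≤ v i)
    (h : ∀ i, u i * v i = 0) : vabs (u - v) = u + v := by
  funext i; exact abs_sub_of_mul_zero _ _ (hu i) (hv i) (h i)

lemma posPart_sub {s : ℕ} (u v : Fin s → ℝ) (hu : ∀ i, 0 ≤ u i) (hv : ∀ i, 0 ≤ v i)
    (h : ∀ i, u i * v i = 0) : posPart' (u - v) = u := by
  funext i; exact pp_sub _ _ (hu i) (hv i) (h i)

lemma negPart_sub {s : ℕ} (u v : Fin s → ℝ) (hu : ∀ i, 0 ≤ u i) (hv : ∀ i, 0 ≤ v i)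
    (h : ∀ i, u i * v i = 0) : negPart' (u - v) = v := by
  funext i; exact np_sub _ _ (hu i) (hv i) (h i)

lemma pos_sub_neg {s : ℕ} (z : Fin s → ℝ) : posPart' z - negPart' z = z := by
  funext i
  rcases le_total (z i) 0 with h | h
  · simp [posPart', negPart', Pi.sub_apply, max_eq_right h, max_eq_left (neg_nonneg.2 h)]
  · simp [posPart', negPart', Pi.sub_apply, max_eq_left h, max_eq_right (neg_nonpos.2 h)]

lemma pos_add_neg {s : ℕ} (z : Fin s → ℝ) : posPart' z + negPart' z = vabs z := by
  funext i
  rcases le_total (z i) 0 with h | h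
  · simp [posPart', negPart', vabs, Pi.add_apply, max_eq_right h,
      max_eq_left (neg_nonneg.2 h), abs_of_nonpos h]
  · simp [posPart', negPart', vabs, Pi.add_apply, max_eq_left h,
      max_eq_right (neg_nonpos.2 h), abs_of_nonneg h]

lemma pos_mul_neg {s : ℕ} (z : Fin s → ℝ) (i : Fin s) : posPart' z i * negPart' z i = 0 := by
  rcases le_total (z i) 0 with h | h
  · simp [posPart', max_eq_right h]
  · simp [negPart', max_eq_right (neg_nonpos.2 h)]

lemma cont_posPart {s : ℕ} : Continuous (posPart' (s := s)) := by
  unfold posPart'; fun_prop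

lemma cont_negPart {s : ℕ} : Continuous (negPart' (s := s)) := by
  unfold negPart'; fun_prop

/-- The map `φ̄(t,w,uᵗ,vᵗ,u^w,v^w) = (t, w, uᵗ-vᵗ, u^w-v^w)` is a homeomorphism
from `F_empcc` onto `F_eabs` with inverse
`φ̄⁻¹(t,w,zᵗ,z^w) = (t, w, [zᵗ]⁺, [zᵗ]⁻, [z^w]⁺, [z^w]⁻)`. -/
theorem stmt2 {n s m₁ m₂ : ℕ}
    (Dt : Set (Fin n → ℝ)) (Dz : Set (Fin s → ℝ))
    (hDt : IsOpen Dt) (hDz : IsOpen Dz)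
    (hsym : ∀ z ∈ Dz, ∀ σ : Fin s → ℝ, (∀ i, σ i = -1 ∨ σ i = 0 ∨ σ i = 1) →
      (fun i => σ i * z i) ∈ Dz)
    (cE : (Fin n → ℝ) × (Fin s → ℝ) → Fin m₁ → ℝ)
    (cI : (Fin n → ℝ) × (Fin s → ℝ) → Fin m₂ → ℝ)
    (cZ : (Fin n → ℝ) × (Fin s → ℝ) → Fin s → ℝ)
    (hcE : ContinuousOn cE (Dt ×ˢ Dz))
    (hcI : ContinuousOn cI (Dt ×ˢ Dz))
    (hcZ : ContinuousOn cZ (Dt ×ˢ Dz)) :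
    ∃ h : Fempcc Dt Dz cE cI cZ ≃ₜ Feabs Dt Dz cE cI cZ,
      (∀ q : Fempcc Dt Dz cE cI cZ,
        (h q : (Fin n → ℝ) × (Fin m₂ → ℝ) × (Fin s → ℝ) × (Fin m₂ → ℝ)) =
          ((q : (Fin n → ℝ) × (Fin m₂ → ℝ) × (Fin s → ℝ) × (Fin s → ℝ) ×
              (Fin m₂ → ℝ) × (Fin m₂ → ℝ)).1,
           (q : (Fin n → ℝ) × (Fin m₂ → ℝ) × (Fin s → ℝ) × (Fin s → ℝ) ×
              (Fin m₂ → ℝ) × (Fin m₂ → ℝ)).2.1,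
           (q : (Fin n → ℝ) × (Fin m₂ → ℝ) × (Fin s → ℝ) × (Fin s → ℝ) ×
              (Fin m₂ → ℝ) × (Fin m₂ → ℝ)).2.2.1 -
           (q : (Fin n → ℝ) × (Fin m₂ → ℝ) × (Fin s → ℝ) × (Fin s → ℝ) ×
              (Fin m₂ → ℝ) × (Fin m₂ → ℝ)).2.2.2.1,
           (q : (Fin n → ℝ) × (Fin m₂ → ℝ) × (Fin s → ℝ) × (Fin s → ℝ) ×
              (Fin m₂ → ℝ) × (Fin m₂ → ℝ)).2.2.2.2.1 -
           (q : (Fin n → ℝ) × (Fin m₂ → ℝ) × (Fin s → ℝ) × (Fin s → ℝ) ×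
              (Fin m₂ → ℝ) × (Fin m₂ → ℝ)).2.2.2.2.2)) ∧
      (∀ p : Feabs Dt Dz cE cI cZ,
        (h.symm p : (Fin n → ℝ) × (Fin m₂ → ℝ) × (Fin s → ℝ) × (Fin s → ℝ) ×
            (Fin m₂ → ℝ) × (Fin m₂ → ℝ)) =
          ((p : (Fin n → ℝ) × (Fin m₂ → ℝ) × (Fin s → ℝ) × (Fin m₂ → ℝ)).1,
           (p : (Fin n → ℝ) × (Fin m₂ → ℝ) × (Fin s → ℝ) × (Fin m₂ → ℝ)).2.1,
           posPart' (p : (Fin n → ℝ) × (Fin m₂ → ℝ) × (Fin s → ℝ) × (Fin m₂ → ℝ)).2.2.1,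
           negPart' (p : (Fin n → ℝ) × (Fin m₂ → ℝ) × (Fin s → ℝ) × (Fin m₂ → ℝ)).2.2.1,
           posPart' (p : (Fin n → ℝ) × (Fin m₂ → ℝ) × (Fin s → ℝ) × (Fin m₂ → ℝ)).2.2.2,
           negPart' (p : (Fin n → ℝ) × (Fin m₂ → ℝ) × (Fin s → ℝ) × (Fin m₂ → ℝ)).2.2.2)) := by
  -- forward map well-defined
  have hfwd : ∀ q ∈ Fempcc Dt Dz cE cI cZ,
      (q.1, q.2.1, q.2.2.1 - q.2.2.2.1, q.2.2.2.2.1 - q.2.2.2.2.2) ∈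
        Feabs Dt Dz cE cI cZ := by
    rintro ⟨t, w, u, v, uw, vw⟩ ⟨ht, hz, hu, hv, huv, huw, hvw, huvw, h1, h2, h3, h4⟩
    have habs : vabs (u - v) = u + v := vabs_sub u v hu hv huv
    have habsw : vabs (uw - vw) = uw + vw := vabs_sub uw vw huw hvw huvw
    have hmem : u - v ∈ Dz := by
      have := hsym _ hz (fun i => if v i = 0 then 1 else -1) (by
        intro i; by_cases h : v i = 0 <;> simp [h])
      convert this using 1
      funext i
      by_cases h : v i = 0
      · simp [h, Pi.sub_apply, Pi.add_apply]
      · have hui : u i = 0 := by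
          rcases mul_eq_zero.1 (huv i) with h' | h'
          · exact h'
          · exact absurd h' h
        simp [h, hui, Pi.sub_apply, Pi.add_apply]
    exact ⟨ht, hmem, by simpa [habs] using h1, by simpa [habs, habsw] using h2,
      by simpa [habs] using h3, h4⟩
  -- backward map well-defined
  have hbwd : ∀ p ∈ Feabs Dt Dz cE cI cZ,
      (p.1, p.2.1, posPart' p.2.2.1, negPart' p.2.2.1, posPart' p.2.2.2,
        negPart' p.2.2.2) ∈ Fempcc Dt Dz cE cI cZ := by
    rintro ⟨t, w, z, zw⟩ ⟨ht, hz, h1, h2, h3, h4⟩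
    have hsum : posPart' z + negPart' z = vabs z := pos_add_neg z
    have hsumw : posPart' zw + negPart' zw = vabs zw := pos_add_neg zw
    have hmem : posPart' z + negPart' z ∈ Dz := by
      rw [hsum]
      have := hsym _ hz (fun i => if z i < 0 then -1 else 1) (by
        intro i; by_cases h : z i < 0 <;> simp [h])
      convert this using 1
      funext i
      by_cases h : z i < 0
      · simp [vabs, h, abs_of_neg h]
      · simp [vabs, h, abs_of_nonneg (not_lt.1 h)]
    refine ⟨ht, hmem, fun i => le_max_right _ _, fun i => le_max_right _ _,
      pos_mul_neg z, fun i => le_max_right _ _, fun i => le_max_right _ _,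
      pos_mul_neg zw, by simpa [hsum] using h1, by simpa [hsum, hsumw] using h2,
      by simpa [hsum, pos_sub_neg] using h3, by simpa [pos_sub_neg] using h4⟩
  refine ⟨{
    toFun := fun q => ⟨(q.1.1, q.1.2.1, q.1.2.2.1 - q.1.2.2.2.1,
        q.1.2.2.2.2.1 - q.1.2.2.2.2.2), hfwd q.1 q.2⟩
    invFun := fun p => ⟨(p.1.1, p.1.2.1, posPart' p.1.2.2.1, negPart' p.1.2.2.1,
        posPart' p.1.2.2.2, negPart' p.1.2.2.2), hbwd p.1 p.2⟩
    left_inv := by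
      rintro ⟨⟨t, w, u, v, uw, vw⟩, ht, hz, hu, hv, huv, huw, hvw, huvw, h1, h2, h3, h4⟩
      apply Subtype.ext
      simp only [Subtype.mk.injEq, Prod.mk.injEq]
      exact ⟨trivial, trivial, posPart_sub u v hu hv huv, negPart_sub u v hu hv huv,
        posPart_sub uw vw huw hvw huvw, negPart_sub uw vw huw hvw huvw⟩
    right_inv := by
      rintro ⟨⟨t, w, z, zw⟩, hp⟩
      simp only [Subtype.mk.injEq, Prod.mk.injEq]
      exact ⟨trivial, trivial, pos_sub_neg z, pos_sub_neg zw⟩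
    continuous_toFun := by
      apply Continuous.subtype_mk
      fun_prop
    continuous_invFun := by
      apply Continuous.subtype_mk
      refine Continuous.prodMk (by fun_prop) (Continuous.prodMk (by fun_prop) ?_)
      refine Continuous.prodMk ?_ (Continuous.prodMk ?_ (Continuous.prodMk ?_ ?_)) <;>
        first
          | exact cont_posPart.comp (by fun_prop)
          | exact cont_negPart.comp (by fun_prop) }, fun q => rfl, fun p => rfl⟩
end

section
/- Let J_E ∈ ℝ^{m₁×n}, J_I ∈ ℝ^{m₂×n}, J_α ∈ ℝ^{p×n} be real matrices and let w ∈ ℝ^{m₂}. Set A = {i ∈ {1,…,m₂} : wᵢ = 0} and Σ^w = diag(sign(w)) ∈ ℝ^{m₂×m₂}. Then the block matrix M = [[J_E, 0], [J_I, −Σ^w], [J_α, 0], [0, P_A]] ∈ ℝ^{(m₁+m₂+p+|A|)×(n+m₂)} has full row rank if and only if the matrix [[J_E], [P_A J_I], [J_α]] ∈ ℝ^{(m₁+|A|+p)×n} has full row rank. (This is the equivalence between LIKQ for the abs-normal NLP with inequalities and LIKQ for its slack reformulation, expressed at the level of the Jacobians; in particular it is independent of the choice of slack vector w with prescribed zero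 set A.) -/
open Matrix
open scoped Classical

noncomputable section

/-- Selection matrix `P_S` whose rows are the unit row vectors `eᵢᵀ`, `i ∈ S`. -/
def sel {k : ℕ} (p : Fin k → Prop) : Matrix {i // p i} (Fin k) ℝ :=
  Matrix.of fun i j => if (i : Fin k) = j then 1 else 0

lemma fullRowRank_iff {m n : Type*} [Fintype m] [Fintype n] (A : Matrix m n ℝ) :
    A.rank = Fintype.card m ↔
      ∀ g : m → ℝ, (∀ j, ∑ i, g i * A i j = 0) → ∀ i, g i = 0 := by
  have h1 : A.rank = Fintype.card m ↔ LinearIndependent ℝ (fun i => A i) := by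
    rw [Matrix.rank_eq_finrank_span_row, linearIndependent_iff_card_eq_finrank_span,
      Set.finrank, eq_comm]
    exact Iff.rfl
  rw [h1, Fintype.linearIndependent_iff]
  refine forall_congr' fun g => ?_
  constructor
  · intro h hj
    refine h ?_
    funext j
    simpa [Finset.sum_apply, mul_comm] using hj j
  · intro h hs i
    refine h (fun j => ?_) i
    have := congrFun hs j
    simpa [Finset.sum_apply, mul_comm] using this

lemma sel_sum {k : ℕ} (P : Fin k → Prop) (d : {i // P i} → ℝ) (j : Fin k) :
    ∑ i : {i // P i}, d i * (if (i : Fin k) = j then 1 else 0)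
      = if h : P j then d ⟨j, h⟩ else 0 := by
  split_ifs with h
  · rw [Finset.sum_eq_single ⟨j, h⟩]
    · simp
    · rintro ⟨b, hb⟩ _ hne
      simp only [mul_ite, mul_one, mul_zero, ite_eq_right_iff]
      intro hbj; exact absurd (Subtype.ext hbj) hne
    · simp
  · refine Finset.sum_eq_zero fun i _ => ?_
    simp only [mul_ite, mul_one, mul_zero, ite_eq_right_iff]
    intro hbj; exact absurd (hbj ▸ i.2) h

lemma dite_sum {k : ℕ} (P : Fin k → Prop) (e : {i // P i} → ℝ) (f : Fin k → ℝ) :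
    ∑ j : Fin k, (if h : P j then e ⟨j, h⟩ else 0) * f j
      = ∑ i : {i // P i}, e i * f (i : Fin k) := by
  calc ∑ j : Fin k, (if h : P j then e ⟨j, h⟩ else 0) * f j
      = ∑ j ∈ Finset.univ.filter P, (if h : P j then e ⟨j, h⟩ else 0) * f j := by
        refine (Finset.sum_filter_of_ne fun x _ hx => ?_).symm
        by_contra h
        simp [dif_neg h] at hx
    _ = ∑ i : {i // P i}, (if h : P (i : Fin k) then e ⟨i, h⟩ else 0) * f (i : Fin k) :=
        (Finset.sum_subtype _ (by simp) _)
    _ = ∑ i : {i // P i}, e i * f (i : Fin k) :=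
        Finset.sum_congr rfl fun i _ => by rw [dif_pos i.2]

lemma selmul_apply {k n : ℕ} (P : Fin k → Prop) (B : Matrix (Fin k) (Fin n) ℝ)
    (i : {i // P i}) (j : Fin n) : (sel P * B) i j = B (i : Fin k) j := by
  simp [sel, Matrix.mul_apply, ite_mul]


/-- LIKQ for the abs-normal NLP with inequalities is equivalent to LIKQ for its slack
reformulation, at the level of Jacobians: the big slack Jacobian
`[[J_E, 0], [J_I, −Σ^w], [J_α, 0], [0, P_A]]` has full row rank iff
`[[J_E], [P_A J_I], [J_α]]` has full row rank, where `A = {i : wᵢ = 0}` and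
`Σ^w = diag(sign w)`. -/
theorem stmt3 {m₁ m₂ p n : ℕ}
    (JE : Matrix (Fin m₁) (Fin n) ℝ) (JI : Matrix (Fin m₂) (Fin n) ℝ)
    (Jα : Matrix (Fin p) (Fin n) ℝ) (w : Fin m₂ → ℝ) :
    (Matrix.fromRows (Matrix.fromCols JE (0 : Matrix (Fin m₁) (Fin m₂) ℝ))
      (Matrix.fromRows
        (Matrix.fromCols JI (-(Matrix.diagonal fun i => Real.sign (w i))))
        (Matrix.fromRows (Matrix.fromCols Jα (0 : Matrix (Fin p) (Fin m₂) ℝ))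
          (Matrix.fromCols (0 : Matrix {i // w i = 0} (Fin n) ℝ)
            (sel fun i => w i = 0))))).rank
      = m₁ + m₂ + p + Fintype.card {i // w i = 0}
    ↔ (Matrix.fromRows JE
        (Matrix.fromRows (sel (fun i => w i = 0) * JI) Jα)).rank
      = m₁ + Fintype.card {i // w i = 0} + p := by
  have hc1 : m₁ + m₂ + p + Fintype.card {i // w i = 0}
      = Fintype.card (Fin m₁ ⊕ (Fin m₂ ⊕ (Fin p ⊕ {i // w i = 0}))) := by
    simp [Fintype.card_sum]; ring
  have hc2 : m₁ + Fintype.card {i // w i = 0} + p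
      = Fintype.card (Fin m₁ ⊕ ({i // w i = 0} ⊕ Fin p)) := by
    simp [Fintype.card_sum]; ring
  rw [hc1, hc2, fullRowRank_iff, fullRowRank_iff]
  constructor
  · -- big full rank → small full rank
    intro H g hg
    set a : Fin m₁ → ℝ := fun i => g (Sum.inl i) with ha
    set e : {i // w i = 0} → ℝ := fun i => g (Sum.inr (Sum.inl i)) with he
    set c : Fin p → ℝ := fun i => g (Sum.inr (Sum.inr i)) with hcdef
    set b : Fin m₂ → ℝ := fun j => if h : w j = 0 then e ⟨j, h⟩ else 0 with hb
    have key := H (Sum.elim a (Sum.elim b (Sum.elim c (fun _ : {i // w i = 0} => (0:ℝ)))))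
    have hzero : ∀ i, Sum.elim a (Sum.elim b (Sum.elim c (fun _ : {i // w i = 0} => (0:ℝ)))) i = 0 := by
      refine key fun j => ?_
      cases j with
      | inl j =>
        have h1 := hg j
        simp only [Fintype.sum_sum_type, Sum.elim_inl, Sum.elim_inr,
          fromRows_apply_inl, fromRows_apply_inr, fromCols_apply_inl,
          Pi.zero_apply, zero_mul, mul_zero, Finset.sum_const_zero, add_zero,
          Matrix.zero_apply] at h1 ⊢
        have hbsum : ∑ i : Fin m₂, b i * JI i j
            = ∑ i : {i // w i = 0}, e i * JI (i : Fin m₂) j := by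
          simp only [hb]
          exact dite_sum (fun i => w i = 0) e (fun i => JI i j)
        rw [hbsum]
        simp only [selmul_apply] at h1
        linarith
      | inr j =>
        simp only [Fintype.sum_sum_type, Sum.elim_inl, Sum.elim_inr,
          fromRows_apply_inl, fromRows_apply_inr, fromCols_apply_inr,
          Pi.zero_apply, zero_mul, mul_zero, Finset.sum_const_zero, add_zero, zero_add,
          Matrix.zero_apply, Matrix.neg_apply, Matrix.diagonal_apply]
        have hd : ∑ i : Fin m₂, b i * -(if i = j then Real.sign (w i) else 0)
            = -(b j * Real.sign (w j)) := by
          rw [Finset.sum_eq_single j]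
          · simp
          · intro x _ hx; simp [hx]
          · simp
        rw [hd]
        by_cases h : w j = 0
        · simp [h, Real.sign_zero]
        · simp [hb, dif_neg h]
    refine fun i => ?_
    rcases i with i | i | i
    · exact hzero (Sum.inl i)
    · have h0 := hzero (Sum.inr (Sum.inl (i : Fin m₂)))
      simp only [Sum.elim_inr, Sum.elim_inl, hb] at h0
      rw [dif_pos i.2] at h0
      simpa using h0
    · exact hzero (Sum.inr (Sum.inr (Sum.inl i)))
  · -- small full rank → big full rank
    intro H g hg
    set a : Fin m₁ → ℝ := fun i => g (Sum.inl i) with ha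
    set b : Fin m₂ → ℝ := fun i => g (Sum.inr (Sum.inl i)) with hb
    set c : Fin p → ℝ := fun i => g (Sum.inr (Sum.inr (Sum.inl i))) with hcdef
    set d : {i // w i = 0} → ℝ := fun i => g (Sum.inr (Sum.inr (Sum.inr i))) with hd
    -- use the m₂-block columns
    have hcol : ∀ j : Fin m₂,
        -(b j * Real.sign (w j)) + (if h : w j = 0 then d ⟨j, h⟩ else 0) = 0 := by
      intro j
      have h1 := hg (Sum.inr j)
      simp only [Fintype.sum_sum_type, fromRows_apply_inl, fromRows_apply_inr,
        fromCols_apply_inr, Pi.zero_apply, zero_mul, mul_zero,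
        Finset.sum_const_zero, add_zero, zero_add, Matrix.zero_apply,
        Matrix.neg_apply, Matrix.diagonal_apply, sel, Matrix.of_apply] at h1
      rw [sel_sum (fun i => w i = 0) d j] at h1
      have hsum : ∑ i : Fin m₂, b i * -(if i = j then Real.sign (w i) else 0)
          = -(b j * Real.sign (w j)) := by
        rw [Finset.sum_eq_single j]
        · simp
        · intro x _ hx; simp [hx]
        · simp
      rw [hsum] at h1
      exact h1
    have hbne : ∀ j : Fin m₂, w j ≠ 0 → b j = 0 := by
      intro j hj
      have := hcol j
      rw [dif_neg hj, add_zero, neg_eq_zero] at this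
      have hs : Real.sign (w j) ≠ 0 := fun h => hj (Real.sign_eq_zero_iff.mp h)
      exact (mul_eq_zero.mp this).resolve_right hs
    have hdz : ∀ i : {i // w i = 0}, d i = 0 := by
      rintro ⟨i, hi⟩
      have := hcol i
      rw [dif_pos hi, hi, Real.sign_zero, mul_zero, neg_zero, zero_add] at this
      exact this
    have hbeq : ∀ j : Fin m₂, b j = if h : w j = 0 then b j else 0 := by
      intro j; split_ifs with h
      · rfl
      · exact hbne j h
    have key := H (Sum.elim a (Sum.elim (fun i : {i // w i = 0} => b i.1) c))
    have hzero : ∀ i, Sum.elim a (Sum.elim (fun i : {i // w i = 0} => b i.1) c) i = 0 := by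
      refine key fun j => ?_
      have h1 := hg (Sum.inl j)
      simp only [Fintype.sum_sum_type, Sum.elim_inl, Sum.elim_inr,
        fromRows_apply_inl, fromRows_apply_inr, fromCols_apply_inl,
        Pi.zero_apply, zero_mul, mul_zero, Finset.sum_const_zero, add_zero,
        Matrix.zero_apply, selmul_apply] at h1 ⊢
      have hbs : ∑ i : Fin m₂, b i * JI i j
          = ∑ i : {i // w i = 0}, b i.1 * JI i.1 j := by
        rw [← dite_sum (fun i => w i = 0) (fun i : {i // w i = 0} => b i.1) (fun i => JI i j)]
        exact Finset.sum_congr rfl fun x _ => by rw [hbeq x]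
      rw [hbs] at h1
      linarith
    rintro (i | i | i | i)
    · exact hzero (Sum.inl i)
    · by_cases h : w i = 0
      · have := hzero (Sum.inr (Sum.inl ⟨i, h⟩))
        simpa using this
      · exact hbne i h
    · exact hzero (Sum.inr (Sum.inr i))
    · exact hdz i

end
end

section
/- Let B ∈ ℝ^{p×n}, A ∈ ℝ^{a×n}, C ∈ ℝ^{q×n} be real matrices such that the stacked matrix [[B],[A],[C]] ∈ ℝ^{(p+a+q)×n} has full row rank. Then the stacked matrix [[B],[C]] ∈ ℝ^{(p+q)×n} has full row rank and there exists a vector d ∈ ℝ^n with Bd = 0, Cd = 0, and Ad > 0 componentwise. (With B the equality Jacobian, A the active-inequality Jacobian, and C the active switching Jacobian, this says that LIKQ implies IDKQ for an abs-normal NLP.) -/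
open Matrix

lemma rank_full_iff_surj {m n : Type*} [Fintype m] [Fintype n] (M : Matrix m n ℝ) :
    M.rank = Fintype.card m ↔ Function.Surjective M.mulVec := by
  rw [Matrix.rank]
  constructor
  · intro h
    have ht : LinearMap.range M.mulVecLin = ⊤ := by
      apply Submodule.eq_top_of_finrank_eq
      rw [h]; simp [Module.finrank_pi]
    have := LinearMap.range_eq_top.mp ht
    simpa [Matrix.mulVecLin_apply, Function.Surjective] using this
  · intro h
    have ht : LinearMap.range M.mulVecLin = ⊤ := by
      rw [LinearMap.range_eq_top]
      simpa [Matrix.mulVecLin_apply, Function.Surjective] using h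
    rw [ht]; simp [Module.finrank_pi]

/-- LIKQ implies IDKQ: if the stacked matrix `[[B],[A],[C]]` has full row rank,
then `[[B],[C]]` has full row rank and there is a direction `d` with
`Bd = 0`, `Cd = 0` and `Ad > 0` componentwise. -/
theorem stmt4 {p a q n : ℕ}
    (B : Matrix (Fin p) (Fin n) ℝ) (A : Matrix (Fin a) (Fin n) ℝ)
    (C : Matrix (Fin q) (Fin n) ℝ)
    (h : (Matrix.fromRows B (Matrix.fromRows A C)).rank = p + a + q) :
    (Matrix.fromRows B C).rank = p + q ∧
      ∃ d : Fin n → ℝ, B *ᵥ d = 0 ∧ C *ᵥ d = 0 ∧ ∀ i, 0 < (A *ᵥ d) i := by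
  have hcard : Fintype.card (Fin p ⊕ (Fin a ⊕ Fin q)) = p + a + q := by
    simp [Fintype.card_sum]; omega
  have hsurj : Function.Surjective (Matrix.fromRows B (Matrix.fromRows A C)).mulVec := by
    rw [← rank_full_iff_surj]
    rw [h, hcard]
  constructor
  · rw [show p + q = Fintype.card (Fin p ⊕ Fin q) by simp, rank_full_iff_surj]
    intro v
    obtain ⟨d, hd⟩ := hsurj (Sum.elim (v ∘ Sum.inl) (Sum.elim 0 (v ∘ Sum.inr)))
    rw [Matrix.fromRows_mulVec] at hd
    refine ⟨d, ?_⟩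
    rw [Matrix.fromRows_mulVec]
    funext i
    cases i with
    | inl i => exact congrFun hd (Sum.inl i)
    | inr i =>
      have := congrFun hd (Sum.inr (Sum.inr i))
      simpa [Matrix.fromRows_mulVec] using this
  · obtain ⟨d, hd⟩ := hsurj (Sum.elim 0 (Sum.elim 1 0))
    rw [Matrix.fromRows_mulVec] at hd
    refine ⟨d, ?_, ?_, ?_⟩
    · funext i
      exact congrFun hd (Sum.inl i)
    · funext i
      have := congrFun hd (Sum.inr (Sum.inr i))
      simpa [Matrix.fromRows_mulVec] using this
    · intro i
      have := congrFun hd (Sum.inr (Sum.inl i))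
      simp [Matrix.fromRows_mulVec] at this
      rw [this]
      norm_num
end

section
/- Let B = [1, 1, 0] ∈ ℝ^{1×3}, A = [[4, 0, −1], [0, 4, −1]] ∈ ℝ^{2×3}, and C = [1, −1, 0] ∈ ℝ^{1×3}. Then the stacked matrix [[B],[A],[C]] ∈ ℝ^{4×3} does not have full row rank, while [[B],[C]] has full row rank and the vector d = (0, 0, −1) satisfies Bd = 0, Cd = 0, and Ad > 0 componentwise. (This witnesses that IDKQ is strictly weaker than LIKQ for abs-normal NLPs with inequality constraints.) -/
open Matrix

/-- Example showing that IDKQ is strictly weaker than LIKQ: with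
`B = [1,1,0]`, `A = [[4,0,−1],[0,4,−1]]`, `C = [1,−1,0]`, the stacked matrix
`[[B],[A],[C]]` does not have full row rank, while `[[B],[C]]` has full row rank
and `d = (0,0,−1)` satisfies `Bd = 0`, `Cd = 0`, `Ad > 0`. -/
theorem stmt5 :
    (Matrix.fromRows (!![(1:ℝ), 1, 0])
      (Matrix.fromRows (!![(4:ℝ), 0, -1; 0, 4, -1]) (!![(1:ℝ), -1, 0]))).rank ≠ 4 ∧
    (Matrix.fromRows (!![(1:ℝ), 1, 0]) (!![(1:ℝ), -1, 0])).rank = 2 ∧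
    (!![(1:ℝ), 1, 0]) *ᵥ ![0, 0, -1] = 0 ∧
    (!![(1:ℝ), -1, 0]) *ᵥ ![0, 0, -1] = 0 ∧
    (∀ i, 0 < ((!![(4:ℝ), 0, -1; 0, 4, -1]) *ᵥ ![0, 0, -1]) i) := by
  refine ⟨?_, ?_, ?_, ?_, ?_⟩
  · intro h
    have h3 := Matrix.rank_le_card_width (Matrix.fromRows (!![(1:ℝ), 1, 0])
      (Matrix.fromRows (!![(4:ℝ), 0, -1; 0, 4, -1]) (!![(1:ℝ), -1, 0])))
    rw [h] at h3
    simp at h3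
  · set M := Matrix.fromRows (!![(1:ℝ), 1, 0]) (!![(1:ℝ), -1, 0]) with hM
    have h1 : M.rank ≤ 2 := by simpa using Matrix.rank_le_card_height M
    have h3 : M * Mᵀ = (2:ℝ) • 1 := by
      ext i j
      rcases i with i | i <;> rcases j with j | j <;> fin_cases i <;> fin_cases j <;>
        norm_num [hM, Matrix.mul_apply, Fin.sum_univ_succ,
          Matrix.one_apply, Sum.inl_ne_inr, Sum.inr_ne_inl, Matrix.vecHead, Matrix.vecTail]
    have h2 : (M * Mᵀ).rank ≤ M.rank := Matrix.rank_mul_le_left _ _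
    have h4 : (M * Mᵀ).rank = 2 := by
      rw [h3]
      have hu : IsUnit ((2:ℝ) • (1 : Matrix (Fin 1 ⊕ Fin 1) (Fin 1 ⊕ Fin 1) ℝ)) := by
        rw [Matrix.isUnit_iff_isUnit_det]
        simp [Matrix.det_smul]
      simpa using Matrix.rank_of_isUnit _ hu
    omega
  · ext i; fin_cases i; simp [Matrix.mulVec, dotProduct, Fin.sum_univ_succ]
  · ext i; fin_cases i; simp [Matrix.mulVec, dotProduct, Fin.sum_univ_succ]
  · intro i; fin_cases i <;> norm_num [Matrix.mulVec, dotProduct, Fin.sum_univ_succ]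
end

section
/- Let E₁ ∈ ℝ^{m×n}, E₂ ∈ ℝ^{m×s}, A₁ ∈ ℝ^{a×n}, A₂ ∈ ℝ^{a×s}, Z₁ ∈ ℝ^{s×n}, Z₂ ∈ ℝ^{s×s} be real matrices, let σ ∈ {−1,0,1}^s, Σ = diag(σ), and set U = {i : σᵢ = 1}, V = {i : σᵢ = −1}, D = {i : σᵢ = 0}. Assume I − Z₂Σ is invertible and set W = (I − Z₂Σ)⁻¹Z₁ ∈ ℝ^{s×n}. Then the following two conditions are equivalent: (i) the matrix M = [[E₁, E₂P_Uᵀ, E₂P_Vᵀ], [Z₁, (Z₂−I)P_Uᵀ, (Z₂+I)P_Vᵀ]] ∈ ℝ^{(m+s)×(n+|U|+|V|)} has full row rank and there exists d ∈ ℝ^{n+|U|+|V|} with Md = 0 and [A₁, A₂P_Uᵀ, A₂P_Vᵀ]d > 0 componentwise; (ii) the matrix N = [[E₁ + E₂ΣW], [P_D W]] ∈ ℝ^{(m+|D|)×n} has full row rank and there exists d_x ∈ ℝ^n with (E₁ + E₂ΣW)d_x = 0, (P_D W)d_x = 0, and (A₁ + A₂ΣW)d_x > 0 componentwise. (With the matrices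 taken as the partial derivatives of cE, the active inequalities cA, and cZ at a feasible point, this is the equivalence of MPCC-MFCQ for the counterpart MPCC and IDKQ for the abs-normal NLP.) -/
open Matrix
open scoped Classical

noncomputable section

lemma sel_mulVec_apply {k : ℕ} (p : Fin k → Prop) (w : Fin k → ℝ) (j : {i // p i}) :
    (sel p *ᵥ w) j = w ↑j := by
  simp [sel, Matrix.mulVec, dotProduct, ite_mul]

lemma selT_mulVec_apply {k : ℕ} (p : Fin k → Prop) (u : {i // p i} → ℝ) (i : Fin k) :
    ((sel p)ᵀ *ᵥ u) i = if h : p i then u ⟨i, h⟩ else 0 := by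
  change (∑ j : {i // p i}, (sel p)ᵀ i j * u j) = _
  by_cases h : p i
  · rw [dif_pos h, Finset.sum_eq_single (⟨i, h⟩ : {i // p i})]
    · simp [sel]
    · intro b _ hb
      have : ¬((b : Fin k) = i) := fun hbi => hb (Subtype.ext hbi)
      simp [sel, this]
    · simp
  · rw [dif_neg h]
    apply Finset.sum_eq_zero
    intro b _
    have : ¬((b : Fin k) = i) := fun hbi => h (hbi ▸ b.2)
    simp [sel, this]

lemma vecMul_sel_apply {k : ℕ} (p : Fin k → Prop) (η : {i // p i} → ℝ) (i : Fin k) :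
    (η ᵥ* sel p) i = if h : p i then η ⟨i, h⟩ else 0 := by
  rw [← Matrix.mulVec_transpose]; exact selT_mulVec_apply p η i

lemma vecMul_selT_apply {k : ℕ} (p : Fin k → Prop) (r : Fin k → ℝ) (j : {i // p i}) :
    (r ᵥ* (sel p)ᵀ) j = r ↑j := by
  rw [Matrix.vecMul_transpose]; exact sel_mulVec_apply p r j

lemma rank_eq_card_rows_iff {m' n' : Type*} [Fintype m'] [Fintype n'] (A : Matrix m' n' ℝ) :
    A.rank = Fintype.card m' ↔ ∀ y : m' → ℝ, y ᵥ* A = 0 → y = 0 := by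
  classical
  rw [← Matrix.rank_transpose]
  have hrn := LinearMap.finrank_range_add_finrank_ker (Aᵀ.mulVecLin)
  have hcard : Module.finrank ℝ (m' → ℝ) = Fintype.card m' := Module.finrank_pi ℝ
  rw [hcard] at hrn
  have hAT : Aᵀ.rank = Module.finrank ℝ (LinearMap.range Aᵀ.mulVecLin) := rfl
  have hker : (∀ y : m' → ℝ, y ᵥ* A = 0 → y = 0) ↔ LinearMap.ker Aᵀ.mulVecLin = ⊥ := by
    rw [LinearMap.ker_eq_bot']
    constructor
    · intro h y hy
      exact h y (by rwa [Matrix.mulVecLin_apply, Matrix.mulVec_transpose] at hy)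
    · intro h y hy
      exact h y (by rwa [Matrix.mulVecLin_apply, Matrix.mulVec_transpose])
  rw [hker]
  constructor
  · intro h
    rw [hAT] at h
    have : Module.finrank ℝ (LinearMap.ker Aᵀ.mulVecLin) = 0 := by omega
    exact Submodule.finrank_eq_zero.mp this
  · intro h
    rw [hAT]
    rw [h] at hrn
    simpa using hrn

/-- MPCC-MFCQ for the counterpart MPCC is equivalent to IDKQ for the abs-normal NLP,
at the level of Jacobians. -/
theorem stmt7 {m a s n : ℕ}
    (E₁ : Matrix (Fin m) (Fin n) ℝ) (E₂ : Matrix (Fin m) (Fin s) ℝ)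
    (A₁ : Matrix (Fin a) (Fin n) ℝ) (A₂ : Matrix (Fin a) (Fin s) ℝ)
    (Z₁ : Matrix (Fin s) (Fin n) ℝ) (Z₂ : Matrix (Fin s) (Fin s) ℝ)
    (σ : Fin s → ℝ) (hσ : ∀ i, σ i = -1 ∨ σ i = 0 ∨ σ i = 1)
    (hinv : IsUnit (1 - Z₂ * Matrix.diagonal σ)) :
    ((Matrix.fromRows
        (Matrix.fromCols E₁ (Matrix.fromCols
          (E₂ * (sel fun i => σ i = 1)ᵀ) (E₂ * (sel fun i => σ i = -1)ᵀ)))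
        (Matrix.fromCols Z₁ (Matrix.fromCols
          ((Z₂ - 1) * (sel fun i => σ i = 1)ᵀ)
          ((Z₂ + 1) * (sel fun i => σ i = -1)ᵀ)))).rank = m + s ∧
      ∃ d : (Fin n ⊕ ({i // σ i = 1} ⊕ {i // σ i = -1})) → ℝ,
        (Matrix.fromRows
          (Matrix.fromCols E₁ (Matrix.fromCols
            (E₂ * (sel fun i => σ i = 1)ᵀ) (E₂ * (sel fun i => σ i = -1)ᵀ)))
          (Matrix.fromCols Z₁ (Matrix.fromCols
            ((Z₂ - 1) * (sel fun i => σ i = 1)ᵀ)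
            ((Z₂ + 1) * (sel fun i => σ i = -1)ᵀ)))) *ᵥ d = 0 ∧
        ∀ i, 0 < ((Matrix.fromCols A₁ (Matrix.fromCols
          (A₂ * (sel fun i => σ i = 1)ᵀ) (A₂ * (sel fun i => σ i = -1)ᵀ))) *ᵥ d) i)
    ↔ ((Matrix.fromRows
        (E₁ + E₂ * Matrix.diagonal σ * ((1 - Z₂ * Matrix.diagonal σ)⁻¹ * Z₁))
        (sel (fun i => σ i = 0) *
          ((1 - Z₂ * Matrix.diagonal σ)⁻¹ * Z₁))).rank
        = m + Fintype.card {i // σ i = 0} ∧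
      ∃ dx : Fin n → ℝ,
        (E₁ + E₂ * Matrix.diagonal σ *
          ((1 - Z₂ * Matrix.diagonal σ)⁻¹ * Z₁)) *ᵥ dx = 0 ∧
        (sel (fun i => σ i = 0) *
          ((1 - Z₂ * Matrix.diagonal σ)⁻¹ * Z₁)) *ᵥ dx = 0 ∧
        ∀ i, 0 < ((A₁ + A₂ * Matrix.diagonal σ *
          ((1 - Z₂ * Matrix.diagonal σ)⁻¹ * Z₁)) *ᵥ dx) i) := by
  classical
  set PU := sel (fun i : Fin s => σ i = 1) with hPU
  set PV := sel (fun i : Fin s => σ i = -1) with hPV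
  set PD := sel (fun i : Fin s => σ i = 0) with hPD
  set Sg := Matrix.diagonal σ with hSg
  set T := (1 : Matrix (Fin s) (Fin s) ℝ) - Z₂ * Sg with hTdef
  set W := T⁻¹ * Z₁ with hWdef
  have hTdet : IsUnit T.det := (Matrix.isUnit_iff_isUnit_det T).mp hinv
  have hTT : T * T⁻¹ = 1 := Matrix.mul_nonsing_inv T hTdet
  have hTT' : T⁻¹ * T = 1 := Matrix.nonsing_inv_mul T hTdet
  -- uniformize the bottom blocks
  have hZU : (Z₂ - 1) * PUᵀ = (Z₂ - Sg) * PUᵀ := by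
    ext i j
    have hj : σ (j : Fin s) = 1 := j.2
    simp only [hPU, Matrix.mul_apply, Matrix.transpose_apply, sel, Matrix.of_apply,
      mul_ite, mul_one, mul_zero, Finset.sum_ite_eq, Finset.mem_univ, if_true]
    by_cases hij : i = (j : Fin s)
    · subst hij
      simp [hSg, Matrix.sub_apply, Matrix.one_apply, Matrix.diagonal_apply, hj]
    · simp [hSg, Matrix.sub_apply, Matrix.one_apply, Matrix.diagonal_apply, hij]
  have hZV : (Z₂ + 1) * PVᵀ = (Z₂ - Sg) * PVᵀ := by
    ext i j
    have hj : σ (j : Fin s) = -1 := j.2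
    simp only [hPV, Matrix.mul_apply, Matrix.transpose_apply, sel, Matrix.of_apply,
      mul_ite, mul_one, mul_zero, Finset.sum_ite_eq, Finset.mem_univ, if_true]
    by_cases hij : i = (j : Fin s)
    · subst hij
      simp [hSg, Matrix.sub_apply, Matrix.add_apply, Matrix.one_apply, Matrix.diagonal_apply, hj]
    · simp [hSg, Matrix.sub_apply, Matrix.add_apply, Matrix.one_apply, Matrix.diagonal_apply, hij]
  simp only [hZU, hZV]
  -- block mulVec / vecMul helpers
  have hblockmv : ∀ {q : ℕ} (B₁ : Matrix (Fin q) (Fin n) ℝ) (B₂ : Matrix (Fin q) (Fin s) ℝ)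
      (dx : Fin n → ℝ) (du : {i // σ i = 1} → ℝ) (dv : {i // σ i = -1} → ℝ),
      fromCols B₁ (fromCols (B₂ * PUᵀ) (B₂ * PVᵀ)) *ᵥ Sum.elim dx (Sum.elim du dv)
        = B₁ *ᵥ dx + B₂ *ᵥ (PUᵀ *ᵥ du + PVᵀ *ᵥ dv) := by
    intro q B₁ B₂ dx du dv
    rw [fromCols_mulVec_sumElim, fromCols_mulVec_sumElim, Matrix.mulVec_add,
      Matrix.mulVec_mulVec, Matrix.mulVec_mulVec]
  have hblockvm : ∀ {q : ℕ} (B₁ : Matrix (Fin q) (Fin n) ℝ) (B₂ : Matrix (Fin q) (Fin s) ℝ)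
      (y : Fin q → ℝ),
      y ᵥ* fromCols B₁ (fromCols (B₂ * PUᵀ) (B₂ * PVᵀ))
        = Sum.elim (y ᵥ* B₁) (Sum.elim ((y ᵥ* B₂) ᵥ* PUᵀ) ((y ᵥ* B₂) ᵥ* PVᵀ)) := by
    intro q B₁ B₂ y
    rw [vecMul_fromCols, vecMul_fromCols, Matrix.vecMul_vecMul, Matrix.vecMul_vecMul]
  refine and_congr ?_ ?_
  · -- rank part
    have hcM : Fintype.card (Fin m ⊕ Fin s) = m + s := by simp
    have hcN : Fintype.card (Fin m ⊕ {i // σ i = 0}) = m + Fintype.card {i // σ i = 0} := by simp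
    rw [← hcM, ← hcN, rank_eq_card_rows_iff, rank_eq_card_rows_iff]
    constructor
    · intro hK y' hy'
      set y₁ := fun i => y' (Sum.inl i) with hy₁
      set η := fun j => y' (Sum.inr j) with hη
      have hy'e : y' = Sum.elim y₁ η := by funext x; rcases x with x | x <;> rfl
      rw [hy'e, sumElim_vecMul_fromRows, Matrix.vecMul_add] at hy'
      set ζ := η ᵥ* PD with hζ
      set y₂ := (y₁ ᵥ* (E₂ * Sg) + ζ) ᵥ* T⁻¹ with hy₂def
      have hy₂T : y₂ ᵥ* T = y₁ ᵥ* (E₂ * Sg) + ζ := by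
        rw [hy₂def, Matrix.vecMul_vecMul, hTT', Matrix.vecMul_one]
      set u := y₁ ᵥ* E₂ + y₂ ᵥ* Z₂ with hu
      have hy₂i : ∀ i, y₂ i = σ i * u i + ζ i := by
        intro i
        have h0 := congrFun hy₂T i
        rw [hTdef, Matrix.vecMul_sub, Matrix.vecMul_one, ← Matrix.vecMul_vecMul,
          ← Matrix.vecMul_vecMul, hSg] at h0
        simp only [Pi.sub_apply, Pi.add_apply] at h0
        rw [Matrix.vecMul_diagonal, Matrix.vecMul_diagonal] at h0
        rw [hu]
        simp only [Pi.add_apply]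
        linear_combination h0
      have hζD : ∀ i, ¬(σ i = 0) → ζ i = 0 := by
        intro i hi
        rw [hζ, hPD, vecMul_sel_apply, dif_neg hi]
      have hyM : Sum.elim y₁ y₂ ᵥ*
          (fromRows (fromCols E₁ (fromCols (E₂ * PUᵀ) (E₂ * PVᵀ)))
            (fromCols Z₁ (fromCols ((Z₂ - Sg) * PUᵀ) ((Z₂ - Sg) * PVᵀ)))) = 0 := by
        rw [sumElim_vecMul_fromRows, hblockvm, hblockvm]
        funext x
        rcases x with j | j | j
        · simp only [Pi.add_apply, Sum.elim_inl, Pi.zero_apply]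
          have hZ : y₂ ᵥ* Z₁ = y₁ ᵥ* (E₂ * Sg * W) + η ᵥ* (PD * W) := by
            rw [hy₂def, Matrix.vecMul_vecMul, ← hWdef, Matrix.add_vecMul,
              Matrix.vecMul_vecMul, hζ, Matrix.vecMul_vecMul]
          have h0 := congrFun hy' j
          simp only [Pi.add_apply, Pi.zero_apply] at h0
          rw [hZ]
          simp only [Pi.add_apply]
          linarith [h0]
        · simp only [Pi.add_apply, Sum.elim_inr, Sum.elim_inl, Pi.zero_apply]
          rw [hPU, vecMul_selT_apply, vecMul_selT_apply]
          have hj : σ (j : Fin s) = 1 := j.2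
          have h2 : (y₂ ᵥ* (Z₂ - Sg)) (j : Fin s)
              = (y₂ ᵥ* Z₂) (j : Fin s) - y₂ (j : Fin s) * σ (j : Fin s) := by
            rw [Matrix.vecMul_sub, hSg]
            simp only [Pi.sub_apply]
            rw [Matrix.vecMul_diagonal]
          have h1 := hy₂i (j : Fin s)
          rw [hu] at h1
          simp only [Pi.add_apply] at h1
          rw [hζD _ (by rw [hj]; norm_num), hj] at h1
          rw [h2, hj]
          linarith [h1]
        · simp only [Pi.add_apply, Sum.elim_inr, Pi.zero_apply]
          rw [hPV, vecMul_selT_apply, vecMul_selT_apply]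
          have hj : σ (j : Fin s) = -1 := j.2
          have h2 : (y₂ ᵥ* (Z₂ - Sg)) (j : Fin s)
              = (y₂ ᵥ* Z₂) (j : Fin s) - y₂ (j : Fin s) * σ (j : Fin s) := by
            rw [Matrix.vecMul_sub, hSg]
            simp only [Pi.sub_apply]
            rw [Matrix.vecMul_diagonal]
          have h1 := hy₂i (j : Fin s)
          rw [hu] at h1
          simp only [Pi.add_apply] at h1
          rw [hζD _ (by rw [hj]; norm_num), hj] at h1
          rw [h2, hj]
          linarith [h1]
      have h00 := hK _ hyM
      have hy₁0 : ∀ i, y₁ i = 0 := fun i => congrFun h00 (Sum.inl i)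
      have hy₂0 : ∀ i, y₂ i = 0 := fun i => congrFun h00 (Sum.inr i)
      rw [hy'e]
      funext x
      rcases x with x | x
      · exact hy₁0 x
      · simp only [Sum.elim_inr, Pi.zero_apply]
        have hx : σ (x : Fin s) = 0 := x.2
        have h1 := hy₂i (x : Fin s)
        rw [hx, hy₂0] at h1
        have hζx : ζ (x : Fin s) = η x := by
          rw [hζ, hPD, vecMul_sel_apply, dif_pos hx]
        rw [← hζx]
        linarith [h1]
    · intro hK y hy
      set y₁ := fun i => y (Sum.inl i) with hy₁
      set y₂ := fun i => y (Sum.inr i) with hy₂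
      have hye : y = Sum.elim y₁ y₂ := by funext x; rcases x with x | x <;> rfl
      rw [hye, sumElim_vecMul_fromRows, hblockvm, hblockvm] at hy
      set u := y₁ ᵥ* E₂ + y₂ ᵥ* Z₂ with hu
      have hsub : ∀ i, (y₂ ᵥ* (Z₂ - Sg)) i = (y₂ ᵥ* Z₂) i - y₂ i * σ i := by
        intro i
        rw [Matrix.vecMul_sub, hSg]
        simp only [Pi.sub_apply]
        rw [Matrix.vecMul_diagonal]
      have hUV : ∀ i, ¬ (σ i = 0) → y₂ i = σ i * u i := by
        intro i hi
        rcases hσ i with h | h | h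
        · have h0 := congrFun hy (Sum.inr (Sum.inr ⟨i, h⟩))
          simp only [Pi.add_apply, Sum.elim_inr, Pi.zero_apply] at h0
          rw [hPV, vecMul_selT_apply, vecMul_selT_apply] at h0
          rw [hsub, h] at h0
          rw [h, hu]
          simp only [Pi.add_apply]
          linarith [h0]
        · exact absurd h hi
        · have h0 := congrFun hy (Sum.inr (Sum.inl ⟨i, h⟩))
          simp only [Pi.add_apply, Sum.elim_inr, Sum.elim_inl, Pi.zero_apply] at h0
          rw [hPU, vecMul_selT_apply, vecMul_selT_apply] at h0
          rw [hsub, h] at h0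
          rw [h, hu]
          simp only [Pi.add_apply]
          linarith [h0]
      set η := fun j : {i // σ i = 0} => y₂ (j : Fin s) with hηdef
      set ζ := η ᵥ* PD with hζ
      have hζi : ∀ i, ζ i = y₂ i - σ i * u i := by
        intro i
        by_cases hi : σ i = 0
        · rw [hζ, hPD, vecMul_sel_apply, dif_pos hi, hi]
          show y₂ i = y₂ i - 0 * u i
          ring
        · rw [hζ, hPD, vecMul_sel_apply, dif_neg hi, hUV i hi]
          ring
      have hy₂T : y₂ ᵥ* T = y₁ ᵥ* (E₂ * Sg) + ζ := by
        funext i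
        rw [hTdef, Matrix.vecMul_sub, Matrix.vecMul_one, ← Matrix.vecMul_vecMul, hSg]
        simp only [Pi.sub_apply, Pi.add_apply]
        rw [Matrix.vecMul_diagonal, ← Matrix.vecMul_vecMul, Matrix.vecMul_diagonal, hζi i, hu]
        simp only [Pi.add_apply]
        ring
      have hy₂eq : y₂ = (y₁ ᵥ* (E₂ * Sg) + ζ) ᵥ* T⁻¹ := by
        rw [← hy₂T, Matrix.vecMul_vecMul, hTT, Matrix.vecMul_one]
      have hNy : Sum.elim y₁ η ᵥ* fromRows (E₁ + E₂ * Sg * W) (PD * W) = 0 := by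
        rw [sumElim_vecMul_fromRows, Matrix.vecMul_add]
        have hZ : y₂ ᵥ* Z₁ = y₁ ᵥ* (E₂ * Sg * W) + η ᵥ* (PD * W) := by
          rw [hy₂eq, Matrix.vecMul_vecMul, ← hWdef, Matrix.add_vecMul,
            Matrix.vecMul_vecMul, hζ, Matrix.vecMul_vecMul]
        have h0 : y₁ ᵥ* E₁ + y₂ ᵥ* Z₁ = 0 := by
          funext j
          have h0' := congrFun hy (Sum.inl j)
          simpa using h0'
        rw [hZ] at h0
        funext j
        have h1 := congrFun h0 j
        simp only [Pi.add_apply, Pi.zero_apply] at h1 ⊢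
        linarith
      have h00 := hK _ hNy
      have hy₁0 : y₁ = 0 := funext fun i => congrFun h00 (Sum.inl i)
      have hη0 : η = 0 := funext fun j => congrFun h00 (Sum.inr j)
      have hζ0 : ζ = 0 := by rw [hζ, hη0, Matrix.zero_vecMul]
      have hy₂0 : y₂ = 0 := by
        rw [hy₂eq, hζ0, hy₁0, Matrix.zero_vecMul, add_zero, Matrix.zero_vecMul]
      rw [hye, hy₁0, hy₂0]
      funext x
      rcases x with x | x <;> rfl
  · -- existence part
    constructor
    · rintro ⟨d, hMd, hAd⟩
      set dx := fun i => d (Sum.inl i) with hdx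
      set du := fun i => d (Sum.inr (Sum.inl i)) with hdu
      set dv := fun i => d (Sum.inr (Sum.inr i)) with hdv
      have hd : d = Sum.elim dx (Sum.elim du dv) := by
        funext x
        rcases x with x | x | x <;> rfl
      rw [hd, fromRows_mulVec, hblockmv, hblockmv] at hMd
      set w := PUᵀ *ᵥ du + PVᵀ *ᵥ dv with hwdef
      have htop : E₁ *ᵥ dx + E₂ *ᵥ w = 0 := funext fun i => congrFun hMd (Sum.inl i)
      have hbot : Z₁ *ᵥ dx + (Z₂ - Sg) *ᵥ w = 0 := funext fun i => congrFun hMd (Sum.inr i)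
      have hwD : ∀ i, σ i = 0 → w i = 0 := by
        intro i hi
        have h1 : ¬ σ i = 1 := by rw [hi]; norm_num
        have h2 : ¬ σ i = -1 := by rw [hi]; norm_num
        rw [hwdef]
        simp only [Pi.add_apply, hPU, hPV, selT_mulVec_apply, dif_neg h1, dif_neg h2, add_zero]
      set z := Sg *ᵥ w with hzdef
      have hzw : Sg *ᵥ z = w := by
        funext i
        rw [hzdef, hSg, Matrix.mulVec_diagonal, Matrix.mulVec_diagonal]
        rcases hσ i with h | h | h
        · rw [h]; ring
        · rw [h, hwD i h]; ring
        · rw [h]; ring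
      have hTz : T *ᵥ z = Z₁ *ᵥ dx := by
        have hz2 : Z₂ *ᵥ w = (Z₂ * Sg) *ᵥ z := by rw [← Matrix.mulVec_mulVec, hzw]
        funext i
        have hb := congrFun hbot i
        rw [Matrix.sub_mulVec, hz2, ← hzdef] at hb
        rw [hTdef, Matrix.sub_mulVec, Matrix.one_mulVec]
        simp only [Pi.sub_apply, Pi.add_apply, Pi.zero_apply] at hb ⊢
        linarith
      have hzW : z = W *ᵥ dx := by
        have h1 : (T⁻¹ * T) *ᵥ z = T⁻¹ *ᵥ (Z₁ *ᵥ dx) := by rw [← Matrix.mulVec_mulVec, hTz]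
        rw [hTT', Matrix.one_mulVec] at h1
        rw [h1, Matrix.mulVec_mulVec, ← hWdef]
      refine ⟨dx, ?_, ?_, ?_⟩
      · rw [Matrix.add_mulVec, ← Matrix.mulVec_mulVec, ← Matrix.mulVec_mulVec, ← hzW, hzw]
        exact htop
      · rw [← Matrix.mulVec_mulVec, ← hzW]
        funext j
        rw [hPD, sel_mulVec_apply]
        have h0 : σ (j : Fin s) = 0 := j.2
        rw [hzdef, hSg, Matrix.mulVec_diagonal, h0]
        simp
      · intro i
        have hA := hAd i
        rw [hd, hblockmv] at hA
        rw [Matrix.add_mulVec, ← Matrix.mulVec_mulVec, ← Matrix.mulVec_mulVec, ← hzW, hzw]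
        exact hA
    · rintro ⟨dx, h1, h2, h3⟩
      rw [← Matrix.mulVec_mulVec] at h2
      set z := W *ᵥ dx with hzdef
      set w := Sg *ᵥ z with hwdef
      set du := fun j : {i // σ i = 1} => w (j : Fin s) with hdu
      set dv := fun j : {i // σ i = -1} => w (j : Fin s) with hdv
      have hzD : ∀ i, σ i = 0 → z i = 0 := by
        intro i hi
        have h2' := congrFun h2 ⟨i, hi⟩
        rwa [hPD, sel_mulVec_apply] at h2'
      have hwz : PUᵀ *ᵥ du + PVᵀ *ᵥ dv = w := by
        funext i
        simp only [Pi.add_apply, hPU, hPV, selT_mulVec_apply]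
        rcases hσ i with h | h | h
        · have h1' : ¬ σ i = 1 := by rw [h]; norm_num
          rw [dif_neg h1', dif_pos h, zero_add]
        · have h1' : ¬ σ i = 1 := by rw [h]; norm_num
          have h2' : ¬ σ i = -1 := by rw [h]; norm_num
          rw [dif_neg h1', dif_neg h2', add_zero, hwdef, hSg, Matrix.mulVec_diagonal, h]
          ring
        · have h2' : ¬ σ i = -1 := by rw [h]; norm_num
          rw [dif_pos h, dif_neg h2', add_zero]
      have hSw : Sg *ᵥ w = z := by
        funext i
        rw [hwdef, hSg, Matrix.mulVec_diagonal, Matrix.mulVec_diagonal]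
        rcases hσ i with h | h | h
        · rw [h]; ring
        · rw [h, hzD i h]; ring
        · rw [h]; ring
      refine ⟨Sum.elim dx (Sum.elim du dv), ?_, ?_⟩
      · rw [fromRows_mulVec, hblockmv, hblockmv, hwz]
        have htop : E₁ *ᵥ dx + E₂ *ᵥ w = 0 := by
          rw [hwdef, Matrix.mulVec_mulVec, hzdef, Matrix.mulVec_mulVec]
          rw [Matrix.add_mulVec] at h1
          exact h1
        have hbot : Z₁ *ᵥ dx + (Z₂ - Sg) *ᵥ w = 0 := by
          have hTz : T *ᵥ z = Z₁ *ᵥ dx := by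
            rw [hzdef, Matrix.mulVec_mulVec, hWdef, ← Matrix.mul_assoc, hTT, Matrix.one_mul]
          have hzw2 : Z₂ *ᵥ w = (Z₂ * Sg) *ᵥ z := by rw [hwdef, Matrix.mulVec_mulVec]
          funext i
          have ht := congrFun hTz i
          rw [hTdef, Matrix.sub_mulVec, Matrix.one_mulVec] at ht
          rw [Matrix.sub_mulVec, hzw2, hSw]
          simp only [Pi.sub_apply, Pi.add_apply, Pi.zero_apply] at ht ⊢
          linarith
        funext x
        rcases x with j | j
        · exact congrFun htop j
        · exact congrFun hbot j
      · intro i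
        rw [hblockmv, hwz]
        have h3i := h3 i
        rw [Matrix.add_mulVec] at h3i
        rw [hwdef, Matrix.mulVec_mulVec, hzdef, Matrix.mulVec_mulVec]
        exact h3i

end
end

section
/- Let E₁ ∈ ℝ^{m₁×n}, E₂ ∈ ℝ^{m₁×s}, I₁ ∈ ℝ^{m₂×n}, I₂ ∈ ℝ^{m₂×s}, Z₁ ∈ ℝ^{s×n}, Z₂ ∈ ℝ^{s×s} be real matrices, let σ ∈ {−1,0,1}^s with U = {i : σᵢ = 1}, V = {i : σᵢ = −1}, and let w ∈ ℝ^{m₂} with U^w = {i : wᵢ > 0}, V^w = {i : wᵢ < 0}, A = {i : wᵢ = 0}. Then the block matrix [[E₁, 0, E₂P_Uᵀ, E₂P_Vᵀ, 0, 0], [I₁, 0, I₂P_Uᵀ, I₂P_Vᵀ, −P_{U^w}ᵀ, −P_{V^w}ᵀ], [Z₁, 0, (Z₂−I)P_Uᵀ, (Z₂+I)P_Vᵀ, 0, 0], [0, I_{m₂}, 0, 0, −P_{U^w}ᵀ, +P_{V^w}ᵀ]] ∈ ℝ^{(m₁+m₂+s+m₂)×(n+m₂+|U|+|V|+|U^w|+|V^w|)}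 has full row rank if and only if the block matrix [[E₁, E₂P_Uᵀ, E₂P_Vᵀ], [P_A I₁, P_A I₂P_Uᵀ, P_A I₂P_Vᵀ], [Z₁, (Z₂−I)P_Uᵀ, (Z₂+I)P_Vᵀ]] ∈ ℝ^{(m₁+|A|+s)×(n+|U|+|V|)} has full row rank. (This is the equivalence of MPCC-LICQ for the counterpart MPCC of the general abs-normal NLP and MPCC-LICQ for the counterpart MPCC of its slack reformulation, expressed at the level of the Jacobians.) -/
open Matrix
open scoped Classical

noncomputable section

lemma sel_mul_selT_disjoint {k : ℕ} {p q : Fin k → Prop}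
    (h : ∀ i, p i → q i → False) : sel p * (sel q)ᵀ = 0 := by
  ext i j
  simp only [Matrix.mul_apply, sel, Matrix.transpose_apply, Matrix.of_apply, Matrix.zero_apply]
  refine Finset.sum_eq_zero fun x _ => ?_
  rcases eq_or_ne (i : Fin k) x with h1 | h1
  · rcases eq_or_ne (j : Fin k) x with h2 | h2
    · exact (h x (h1 ▸ i.2) (h2 ▸ j.2)).elim
    · simp [h2]
  · simp [h1]

lemma sel_mul_selT_self {k : ℕ} (p : Fin k → Prop) : sel p * (sel p)ᵀ = 1 := by
  ext i j
  simp only [Matrix.mul_apply, sel, Matrix.transpose_apply, Matrix.of_apply, Matrix.one_apply]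
  rw [Finset.sum_eq_single (i : Fin k)]
  · by_cases h : i = j
    · subst h; simp
    · have : ¬((j : Fin k) = (i : Fin k)) := fun hc => h (Subtype.ext hc.symm)
      simp [h, this]
  · intro x _ hx
    simp [Ne.symm hx]
  · simp

lemma vecMul_selT {k : ℕ} (p : Fin k → Prop) (v : Fin k → ℝ) :
    v ᵥ* (sel p)ᵀ = fun i : {i // p i} => v i := by
  ext i
  simp [Matrix.vecMul, dotProduct, sel, mul_ite]

lemma vecMul_selT_sel {k : ℕ} (p : Fin k → Prop) (v : Fin k → ℝ) (j : Fin k) :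
    ((v ᵥ* (sel p)ᵀ) ᵥ* sel p) j = if p j then v j else 0 := by
  rw [vecMul_selT]
  simp only [Matrix.vecMul, dotProduct, sel, Matrix.of_apply]
  by_cases h : p j
  · rw [Finset.sum_eq_single (⟨j, h⟩ : {i // p i})]
    · simp [h]
    · intro b _ hb
      have : ¬((b : Fin k) = j) := fun hc => hb (Subtype.ext hc)
      simp [this]
    · simp
  · refine (Finset.sum_eq_zero fun x _ => ?_).trans (by simp [h])
    have : ¬((x : Fin k) = j) := fun hc => h (hc ▸ x.2)
    simp [this]

lemma rank_eq_card_iff_ker {m n : Type*} [Fintype m] [Fintype n] (M : Matrix m n ℝ) :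
    M.rank = Fintype.card m ↔ ∀ v, v ᵥ* M = 0 → v = 0 := by
  rw [← Matrix.rank_transpose, Matrix.rank, Matrix.mulVecLin_transpose]
  have h := LinearMap.finrank_range_add_finrank_ker (M.vecMulLinear)
  rw [Module.finrank_pi] at h
  constructor
  · intro hr v hv
    have hk : Module.finrank ℝ (LinearMap.ker M.vecMulLinear) = 0 := by omega
    rw [Submodule.finrank_eq_zero] at hk
    have : v ∈ LinearMap.ker M.vecMulLinear := by
      simpa [LinearMap.mem_ker] using hv
    rw [hk] at this
    simpa using this
  · intro hv
    have hk : LinearMap.ker M.vecMulLinear = ⊥ := by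
      rw [LinearMap.ker_eq_bot']
      intro v h0
      exact hv v (by simpa using h0)
    rw [hk, finrank_bot ℝ] at h
    omega

lemma elim_add {α β γ : Type*} [Add γ] (f f' : α → γ) (g g' : β → γ) :
    Sum.elim f g + Sum.elim f' g' = Sum.elim (f + f') (g + g') := by
  funext x; cases x <;> rfl

lemma elim_eq_zero {α β γ : Type*} [Zero γ] {f : α → γ} {g : β → γ} :
    Sum.elim f g = 0 ↔ f = 0 ∧ g = 0 := by
  constructor
  · intro h
    exact ⟨funext fun a => congrFun h (Sum.inl a), funext fun b => congrFun h (Sum.inr b)⟩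
  · rintro ⟨rfl, rfl⟩
    funext x; cases x <;> rfl

/-- MPCC-LICQ for the counterpart MPCC of the general abs-normal NLP is equivalent to
MPCC-LICQ for the counterpart MPCC of its slack reformulation, at the Jacobian level. -/
theorem stmt8 {m₁ m₂ s n : ℕ}
    (E₁ : Matrix (Fin m₁) (Fin n) ℝ) (E₂ : Matrix (Fin m₁) (Fin s) ℝ)
    (I₁ : Matrix (Fin m₂) (Fin n) ℝ) (I₂ : Matrix (Fin m₂) (Fin s) ℝ)
    (Z₁ : Matrix (Fin s) (Fin n) ℝ) (Z₂ : Matrix (Fin s) (Fin s) ℝ)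
    (σ : Fin s → ℝ) (hσ : ∀ i, σ i = -1 ∨ σ i = 0 ∨ σ i = 1)
    (w : Fin m₂ → ℝ) :
    (Matrix.fromRows
        (Matrix.fromCols E₁ (Matrix.fromCols (0 : Matrix (Fin m₁) (Fin m₂) ℝ)
          (Matrix.fromCols (E₂ * (sel fun i => σ i = 1)ᵀ)
            (Matrix.fromCols (E₂ * (sel fun i => σ i = -1)ᵀ)
              (Matrix.fromCols (0 : Matrix (Fin m₁) {i // 0 < w i} ℝ)
                (0 : Matrix (Fin m₁) {i // w i < 0} ℝ))))))
        (Matrix.fromRows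
          (Matrix.fromCols I₁ (Matrix.fromCols (0 : Matrix (Fin m₂) (Fin m₂) ℝ)
            (Matrix.fromCols (I₂ * (sel fun i => σ i = 1)ᵀ)
              (Matrix.fromCols (I₂ * (sel fun i => σ i = -1)ᵀ)
                (Matrix.fromCols (-(sel fun i => 0 < w i)ᵀ)
                  (-(sel fun i => w i < 0)ᵀ))))))
          (Matrix.fromRows
            (Matrix.fromCols Z₁ (Matrix.fromCols (0 : Matrix (Fin s) (Fin m₂) ℝ)
              (Matrix.fromCols ((Z₂ - 1) * (sel fun i => σ i = 1)ᵀ)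
                (Matrix.fromCols ((Z₂ + 1) * (sel fun i => σ i = -1)ᵀ)
                  (Matrix.fromCols (0 : Matrix (Fin s) {i // 0 < w i} ℝ)
                    (0 : Matrix (Fin s) {i // w i < 0} ℝ))))))
            (Matrix.fromCols (0 : Matrix (Fin m₂) (Fin n) ℝ)
              (Matrix.fromCols (1 : Matrix (Fin m₂) (Fin m₂) ℝ)
                (Matrix.fromCols (0 : Matrix (Fin m₂) {i // σ i = 1} ℝ)
                  (Matrix.fromCols (0 : Matrix (Fin m₂) {i // σ i = -1} ℝ)
                    (Matrix.fromCols (-(sel fun i => 0 < w i)ᵀ)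
                      ((sel fun i => w i < 0)ᵀ))))))))).rank
      = m₁ + m₂ + s + m₂
    ↔ (Matrix.fromRows
        (Matrix.fromCols E₁ (Matrix.fromCols
          (E₂ * (sel fun i => σ i = 1)ᵀ) (E₂ * (sel fun i => σ i = -1)ᵀ)))
        (Matrix.fromRows
          (Matrix.fromCols (sel (fun i => w i = 0) * I₁) (Matrix.fromCols
            (sel (fun i => w i = 0) * I₂ * (sel fun i => σ i = 1)ᵀ)
            (sel (fun i => w i = 0) * I₂ * (sel fun i => σ i = -1)ᵀ)))
          (Matrix.fromCols Z₁ (Matrix.fromCols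
            ((Z₂ - 1) * (sel fun i => σ i = 1)ᵀ)
            ((Z₂ + 1) * (sel fun i => σ i = -1)ᵀ))))).rank
      = m₁ + Fintype.card {i // w i = 0} + s := by
  rw [show m₁ + m₂ + s + m₂ = Fintype.card (Fin m₁ ⊕ (Fin m₂ ⊕ (Fin s ⊕ Fin m₂))) by
        simp; ring,
      show m₁ + Fintype.card {i // w i = 0} + s
          = Fintype.card (Fin m₁ ⊕ ({i // w i = 0} ⊕ Fin s)) by simp; ring,
      rank_eq_card_iff_ker, rank_eq_card_iff_ker]
  set PU := sel fun i : Fin s => σ i = 1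
  set PV := sel fun i : Fin s => σ i = -1
  set PUw := sel fun i : Fin m₂ => 0 < w i
  set PVw := sel fun i : Fin m₂ => w i < 0
  set PA := sel fun i : Fin m₂ => w i = 0
  have hAU : PA * PUwᵀ = 0 := sel_mul_selT_disjoint (fun i h1 h2 => by simp [h1] at h2)
  have hAV : PA * PVwᵀ = 0 := sel_mul_selT_disjoint (fun i h1 h2 => by simp [h1] at h2)
  have hAA : PA * PAᵀ = 1 := sel_mul_selT_self _
  constructor
  · -- big kernel trivial → small kernel trivial
    intro H y hy
    set a : Fin m₁ → ℝ := fun i => y (Sum.inl i) with ha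
    set bA : {i // w i = 0} → ℝ := fun i => y (Sum.inr (Sum.inl i)) with hbA
    set c : Fin s → ℝ := fun i => y (Sum.inr (Sum.inr i)) with hc
    have hy0 : y = Sum.elim a (Sum.elim bA c) := by
      funext x; rcases x with x | x | x <;> rfl
    rw [hy0] at hy
    simp only [sumElim_vecMul_fromRows, vecMul_fromCols, elim_add, elim_eq_zero] at hy
    obtain ⟨h1, h2, h3⟩ := hy
    have hv := H (Sum.elim a (Sum.elim (bA ᵥ* PA) (Sum.elim c 0))) (by
      simp only [sumElim_vecMul_fromRows, vecMul_fromCols, elim_add, elim_eq_zero]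
      refine ⟨?_, ?_, ?_, ?_, ?_, ?_⟩
      · rw [Matrix.vecMul_vecMul, Matrix.zero_vecMul, add_zero]; exact h1
      · simp
      · rw [Matrix.vecMul_vecMul, ← Matrix.mul_assoc, Matrix.zero_vecMul, add_zero]; exact h2
      · rw [Matrix.vecMul_vecMul, ← Matrix.mul_assoc, Matrix.zero_vecMul, add_zero]; exact h3
      · simp [Matrix.vecMul_vecMul, Matrix.mul_neg, hAU]
      · simp [Matrix.vecMul_vecMul, Matrix.mul_neg, hAV])
    have ha0 : a = 0 := funext fun i => congrFun hv (Sum.inl i)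
    have hb0 : bA ᵥ* PA = 0 := funext fun i => congrFun hv (Sum.inr (Sum.inl i))
    have hc0 : c = 0 := funext fun i => congrFun hv (Sum.inr (Sum.inr (Sum.inl i)))
    have hbA0 : bA = 0 := by
      have : bA = (bA ᵥ* PA) ᵥ* PAᵀ := by
        rw [Matrix.vecMul_vecMul, hAA, Matrix.vecMul_one]
      rw [hb0] at this
      simpa [Matrix.zero_vecMul] using this
    rw [hy0, ha0, hbA0, hc0]
    funext x; rcases x with x | x | x <;> rfl
  · -- small kernel trivial → big kernel trivial
    intro H x hx
    set a : Fin m₁ → ℝ := fun i => x (Sum.inl i) with ha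
    set b : Fin m₂ → ℝ := fun i => x (Sum.inr (Sum.inl i)) with hb
    set c : Fin s → ℝ := fun i => x (Sum.inr (Sum.inr (Sum.inl i))) with hc
    set d : Fin m₂ → ℝ := fun i => x (Sum.inr (Sum.inr (Sum.inr i))) with hd
    have hx0 : x = Sum.elim a (Sum.elim b (Sum.elim c d)) := by
      funext z; rcases z with z | z | z | z <;> rfl
    rw [hx0] at hx
    simp only [sumElim_vecMul_fromRows, vecMul_fromCols, elim_add, elim_eq_zero,
      Matrix.vecMul_zero, Matrix.zero_vecMul, Matrix.vecMul_one,
      Matrix.vecMul_neg, add_zero, zero_add] at hx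
    obtain ⟨e1, e2, e3, e4, e5, e6⟩ := hx
    -- e2 : d = 0
    have hd0 : d = 0 := e2
    rw [hd0] at e5 e6
    simp only [Matrix.zero_vecMul, add_zero, neg_add_rev, neg_zero, neg_eq_zero] at e5 e6
    -- e5 : b ᵥ* PUwᵀ = 0, e6 : b ᵥ* PVwᵀ = 0 (up to sign/zero simp)
    have hbU : b ᵥ* PUwᵀ = 0 := e5
    have hbV : b ᵥ* PVwᵀ = 0 := e6
    have hbrec : b = (b ᵥ* PAᵀ) ᵥ* PA := by
      funext k
      rw [vecMul_selT_sel]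
      by_cases h : w k = 0
      · simp [h]
      · rcases lt_trichotomy (w k) 0 with hk | hk | hk
        · have := congrFun hbV ⟨k, hk⟩
          rw [vecMul_selT] at hbV
          have : b k = 0 := congrFun hbV ⟨k, hk⟩
          simp [h, this]
        · exact absurd hk h
        · rw [vecMul_selT] at hbU
          have : b k = 0 := congrFun hbU ⟨k, hk⟩
          simp [h, this]
    have hv := H (Sum.elim a (Sum.elim (b ᵥ* PAᵀ) c)) (by
      simp only [sumElim_vecMul_fromRows, vecMul_fromCols, elim_add, elim_eq_zero]
      refine ⟨?_, ?_, ?_⟩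
      · rw [← Matrix.vecMul_vecMul (b ᵥ* PAᵀ) PA I₁, ← hbrec]; exact e1
      · rw [← Matrix.vecMul_vecMul (b ᵥ* PAᵀ) (PA * I₂) PUᵀ,
            ← Matrix.vecMul_vecMul (b ᵥ* PAᵀ) PA I₂, ← hbrec, Matrix.vecMul_vecMul]
        exact e3
      · rw [← Matrix.vecMul_vecMul (b ᵥ* PAᵀ) (PA * I₂) PVᵀ,
            ← Matrix.vecMul_vecMul (b ᵥ* PAᵀ) PA I₂, ← hbrec, Matrix.vecMul_vecMul]
        exact e4)
    have ha0 : a = 0 := funext fun i => congrFun hv (Sum.inl i)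
    have hbA0 : b ᵥ* PAᵀ = 0 := funext fun i => congrFun hv (Sum.inr (Sum.inl i))
    have hc0 : c = 0 := funext fun i => congrFun hv (Sum.inr (Sum.inr i))
    have hb0 : b = 0 := by rw [hbrec, hbA0, Matrix.zero_vecMul]
    rw [hx0, ha0, hb0, hc0, hd0]
    funext z; rcases z with z | z | z | z <;> rfl

end
end

section
/- Let f' ∈ ℝ^n, E₁ ∈ ℝ^{m₁×n}, E₂ ∈ ℝ^{m₁×s}, I₁ ∈ ℝ^{m₂×n}, I₂ ∈ ℝ^{m₂×s}, Z₁ ∈ ℝ^{s×n}, Z₂ ∈ ℝ^{s×s}, c ∈ ℝ^{m₂}, and σ ∈ {−1,0,1}^s; set U₊ = {i : σᵢ = 1}, V₊ = {i : σᵢ = −1}, D = {i : σᵢ = 0}. Fix multipliers λ_E ∈ ℝ^{m₁}, λ_I ∈ ℝ^{m₂}, λ_Z ∈ ℝ^s and write g = E₂ᵀλ_E − I₂ᵀλ_I + Z₂ᵀλ_Z ∈ ℝ^s. Then the following are equivalent: (i) [kink stationarity] f' + E₁ᵀλ_E − I₁ᵀλ_I + Z₁ᵀλ_Z = 0; gᵢ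 ≥ |(λ_Z)ᵢ| for all i ∈ D; gᵢ = σᵢ(λ_Z)ᵢ for all i ∉ D; λ_I ≥ 0; λ_Iᵀc = 0. (ii) [S-stationarity] there exist μᵘ, μᵛ ∈ ℝ^s with f' + E₁ᵀλ_E − I₁ᵀλ_I + Z₁ᵀλ_Z = 0; g − λ_Z − μᵘ = 0; g + λ_Z − μᵛ = 0; μᵘᵢ ≥ 0 and μᵛᵢ ≥ 0 for all i ∈ D; μᵘᵢ = 0 for all i ∈ U₊; μᵛᵢ = 0 for all i ∈ V₊; λ_I ≥ 0; λ_Iᵀc = 0. (With the matrices taken as the partial derivatives of cE, cI, cZ at a feasible point, f' the gradient of the objective, c the vector of inequality values, and σ the signature of the switching variables, this says that a point is kink stationary for the abs-normal NLP if and only if the corresponding point is strongly stationary for the counterpart MPCC.) -/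
open Matrix

/-- Kink stationarity for the abs-normal NLP is equivalent to S-stationarity for the
counterpart MPCC, for fixed multipliers `(λ_E, λ_I, λ_Z)`. Here `σ` is the signature
(`σᵢ = 1` on `U₊`, `σᵢ = −1` on `V₊`, `σᵢ = 0` on `D`) and
`g = E₂ᵀλ_E − I₂ᵀλ_I + Z₂ᵀλ_Z`. -/
theorem stmt9 {n s m₁ m₂ : ℕ}
    (f' : Fin n → ℝ)
    (E₁ : Matrix (Fin m₁) (Fin n) ℝ) (E₂ : Matrix (Fin m₁) (Fin s) ℝ)
    (I₁ : Matrix (Fin m₂) (Fin n) ℝ) (I₂ : Matrix (Fin m₂) (Fin s) ℝ)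
    (Z₁ : Matrix (Fin s) (Fin n) ℝ) (Z₂ : Matrix (Fin s) (Fin s) ℝ)
    (c : Fin m₂ → ℝ)
    (σ : Fin s → ℝ) (hσ : ∀ i, σ i = -1 ∨ σ i = 0 ∨ σ i = 1)
    (lE : Fin m₁ → ℝ) (lI : Fin m₂ → ℝ) (lZ : Fin s → ℝ) :
    -- (i) kink stationarity
    (f' + E₁ᵀ *ᵥ lE - I₁ᵀ *ᵥ lI + Z₁ᵀ *ᵥ lZ = 0 ∧
      (∀ i, σ i = 0 → |lZ i| ≤ (E₂ᵀ *ᵥ lE - I₂ᵀ *ᵥ lI + Z₂ᵀ *ᵥ lZ) i) ∧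
      (∀ i, σ i ≠ 0 → (E₂ᵀ *ᵥ lE - I₂ᵀ *ᵥ lI + Z₂ᵀ *ᵥ lZ) i = σ i * lZ i) ∧
      (∀ j, 0 ≤ lI j) ∧ lI ⬝ᵥ c = 0)
    ↔
    -- (ii) S-stationarity
    (∃ μu μv : Fin s → ℝ,
      f' + E₁ᵀ *ᵥ lE - I₁ᵀ *ᵥ lI + Z₁ᵀ *ᵥ lZ = 0 ∧
      (E₂ᵀ *ᵥ lE - I₂ᵀ *ᵥ lI + Z₂ᵀ *ᵥ lZ) - lZ - μu = 0 ∧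
      (E₂ᵀ *ᵥ lE - I₂ᵀ *ᵥ lI + Z₂ᵀ *ᵥ lZ) + lZ - μv = 0 ∧
      (∀ i, σ i = 0 → 0 ≤ μu i ∧ 0 ≤ μv i) ∧
      (∀ i, σ i = 1 → μu i = 0) ∧
      (∀ i, σ i = -1 → μv i = 0) ∧
      (∀ j, 0 ≤ lI j) ∧ lI ⬝ᵥ c = 0) := by
  set g := E₂ᵀ *ᵥ lE - I₂ᵀ *ᵥ lI + Z₂ᵀ *ᵥ lZ with hg
  constructor
  · rintro ⟨h1, h2, h3, h4, h5⟩
    refine ⟨g - lZ, g + lZ, h1, by ring, by ring, ?_, ?_, ?_, h4, h5⟩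
    · intro i hi
      have := h2 i hi
      have := abs_le.mp this
      constructor <;> simp only [Pi.sub_apply, Pi.add_apply] <;> linarith [this.1, this.2]
    · intro i hi
      have := h3 i (by rw [hi]; norm_num)
      simp only [Pi.sub_apply]
      rw [this, hi]; ring
    · intro i hi
      have := h3 i (by rw [hi]; norm_num)
      simp only [Pi.add_apply]
      rw [this, hi]; ring
  · rintro ⟨μu, μv, h1, h2, h3, h4, h5, h6, h7, h8⟩
    have hu : ∀ i, μu i = g i - lZ i := by
      intro i
      have := congrFun h2 i
      simp only [Pi.sub_apply, Pi.zero_apply] at this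
      linarith
    have hv : ∀ i, μv i = g i + lZ i := by
      intro i
      have := congrFun h3 i
      simp only [Pi.sub_apply, Pi.add_apply, Pi.zero_apply] at this
      linarith
    refine ⟨h1, ?_, ?_, h7, h8⟩
    · intro i hi
      obtain ⟨hu0, hv0⟩ := h4 i hi
      rw [hu i] at hu0; rw [hv i] at hv0
      rw [abs_le]; constructor <;> linarith
    · intro i hi
      rcases hσ i with h | h | h
      · have := h6 i h
        rw [hv i] at this
        rw [h]; linarith
      · exact absurd h hi
      · have := h5 i h
        rw [hu i] at this
        rw [h]; linarith
end

section
/- Let D^t ⊆ ℝ^n be open and D^z ⊆ ℝ^s be open and symmetric under componentwise sign changes. Let f : D^t → ℝ and cE : D^t × D^z → ℝ^{m₁}, cI : D^t × D^z → ℝ^{m₂}, cZ : D^t × D^z → ℝ^s be continuously differentiable, and assume the partial Jacobian ∂₂cZ(t,r) with respect to the second argument is strictly lower triangular for all (t,r) ∈ D^t × D^z. Let (t*, z*) ∈ D^t × D^z satisfy cE(t*,|z*|) = 0, cI(t*,|z*|) ≥ 0, cZ(t*,|z*|) = z*, and suppose (t*, z*) is a local minimizer of (t,z) ↦ f(t)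 over the feasible set F = {(t,z) ∈ D^t × D^z : cE(t,|z|) = 0, cI(t,|z|) ≥ 0, cZ(t,|z|) = z}. Let σ = sign(z*), Σ = diag(σ), α = {i : z*ᵢ = 0}, A = {i : cIᵢ(t*,|z*|) = 0}, and W = (I − ∂₂cZ*Σ)⁻¹∂₁cZ* ∈ ℝ^{s×n}, where a star denotes evaluation at (t*,|z*|). Assume LIKQ: the matrix [[∂₁cE* + ∂₂cE*ΣW], [P_A(∂₁cI* + ∂₂cI*ΣW)], [P_α W]] has full row rank m₁ + |A| + |α|. Then there exist multipliers λ_E ∈ ℝ^{m₁}, λ_I ∈ ℝ^{m₂}, λ_Z ∈ ℝ^s such that ∇f(t*) + (∂₁cE*)ᵀλ_E − (∂₁cI*)ᵀλ_I + (∂₁cZ*)ᵀλ_Z = 0; ((∂₂cE*)ᵀλ_E − (∂₂cI*)ᵀλ_I + (∂₂cZ*)ᵀλ_Z)ᵢ ≥ |(λ_Z)ᵢ| for all i ∈ α; ((∂₂cE*)ᵀλ_E − (∂₂cI*)ᵀλ_I + (∂₂cZ*)ᵀλ_Z)ᵢ = σᵢ(λ_Z)ᵢ for all i ∉ α; λ_I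 ≥ 0; and λ_Iᵀ cI(t*,|z*|) = 0. -/
open Matrix
open scoped Classical

noncomputable section

/-- Partial Jacobian with respect to the first argument. -/
def jac1 {n s m : ℕ} (c : (Fin n → ℝ) × (Fin s → ℝ) → Fin m → ℝ)
    (p : (Fin n → ℝ) × (Fin s → ℝ)) : Matrix (Fin m) (Fin n) ℝ :=
  Matrix.of fun i j => fderiv ℝ c p (Pi.single j 1, 0) i

/-- Partial Jacobian with respect to the second argument. -/
def jac2 {n s m : ℕ} (c : (Fin n → ℝ) × (Fin s → ℝ) → Fin m → ℝ)
    (p : (Fin n → ℝ) × (Fin s → ℝ)) : Matrix (Fin m) (Fin s) ℝ :=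
  Matrix.of fun i j => fderiv ℝ c p (0, Pi.single j 1) i

open Filter Topology Set

set_option maxHeartbeats 1600000

section AuxDefs

variable {n s m₁ m₂ : ℕ}

/-- componentwise multiplication by `τ` as a continuous linear map -/
def mulDiag (τ : Fin s → ℝ) : (Fin s → ℝ) →L[ℝ] (Fin s → ℝ) :=
  ContinuousLinearMap.pi fun i => τ i • ContinuousLinearMap.proj i

@[simp] lemma mulDiag_apply (τ : Fin s → ℝ) (w : Fin s → ℝ) :
    mulDiag τ w = fun i => τ i * w i := rfl

/-- restriction to a subtype of coordinates as a continuous linear map -/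
def restr {k : ℕ} (p : Fin k → Prop) : (Fin k → ℝ) →L[ℝ] ({i // p i} → ℝ) :=
  ContinuousLinearMap.pi fun i => ContinuousLinearMap.proj i.1

@[simp] lemma restr_apply {k : ℕ} (p : Fin k → Prop) (w : Fin k → ℝ) :
    restr p w = fun i => w i.1 := rfl

/-- `(t, z) ↦ (t, τ * z)` as a continuous linear map -/
def Lmap (n : ℕ) (τ : Fin s → ℝ) :
    ((Fin n → ℝ) × (Fin s → ℝ)) →L[ℝ] ((Fin n → ℝ) × (Fin s → ℝ)) :=
  (ContinuousLinearMap.fst ℝ _ _).prod ((mulDiag τ).comp (ContinuousLinearMap.snd ℝ _ _))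

@[simp] lemma Lmap_apply (τ : Fin s → ℝ) (q : (Fin n → ℝ) × (Fin s → ℝ)) :
    Lmap n τ q = (q.1, fun i => τ i * q.2 i) := rfl

/-- the combined constraint map of the branch problem -/
def PhiMap (cE : (Fin n → ℝ) × (Fin s → ℝ) → Fin m₁ → ℝ)
    (cI : (Fin n → ℝ) × (Fin s → ℝ) → Fin m₂ → ℝ)
    (cZ : (Fin n → ℝ) × (Fin s → ℝ) → Fin s → ℝ)
    (act : Fin m₂ → Prop) (alph : Fin s → Prop) (τ : Fin s → ℝ) :
    (Fin n → ℝ) × (Fin s → ℝ) →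
      (Fin m₁ → ℝ) × ({j // act j} → ℝ) × (Fin s → ℝ) × ({i // alph i} → ℝ) :=
  fun q => (cE (Lmap n τ q), fun j => cI (Lmap n τ q) j.1,
    cZ (Lmap n τ q) - q.2, fun i => q.2 i.1)

/-- the derivative of the combined constraint map -/
def AMap (DE : ((Fin n → ℝ) × (Fin s → ℝ)) →L[ℝ] (Fin m₁ → ℝ))
    (DI : ((Fin n → ℝ) × (Fin s → ℝ)) →L[ℝ] (Fin m₂ → ℝ))
    (DZ : ((Fin n → ℝ) × (Fin s → ℝ)) →L[ℝ] (Fin s → ℝ))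
    (act : Fin m₂ → Prop) (alph : Fin s → Prop) (τ : Fin s → ℝ) :
    ((Fin n → ℝ) × (Fin s → ℝ)) →L[ℝ]
      ((Fin m₁ → ℝ) × ({j // act j} → ℝ) × (Fin s → ℝ) × ({i // alph i} → ℝ)) :=
  (DE.comp (Lmap n τ)).prod (((restr act).comp (DI.comp (Lmap n τ))).prod
    (((DZ.comp (Lmap n τ)) - (ContinuousLinearMap.snd ℝ _ _)).prod
      ((restr alph).comp (ContinuousLinearMap.snd ℝ _ _))))

lemma AMap_apply (DE : ((Fin n → ℝ) × (Fin s → ℝ)) →L[ℝ] (Fin m₁ → ℝ))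
    (DI : ((Fin n → ℝ) × (Fin s → ℝ)) →L[ℝ] (Fin m₂ → ℝ))
    (DZ : ((Fin n → ℝ) × (Fin s → ℝ)) →L[ℝ] (Fin s → ℝ))
    (act : Fin m₂ → Prop) (alph : Fin s → Prop) (τ : Fin s → ℝ)
    (q : (Fin n → ℝ) × (Fin s → ℝ)) :
    AMap DE DI DZ act alph τ q =
      (DE (q.1, fun i => τ i * q.2 i), fun j => DI (q.1, fun i => τ i * q.2 i) j.1,
        DZ (q.1, fun i => τ i * q.2 i) - q.2, fun i => q.2 i.1) := rfl

lemma AMap_apply'' (DE : ((Fin n → ℝ) × (Fin s → ℝ)) →L[ℝ] (Fin m₁ → ℝ))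
    (DI : ((Fin n → ℝ) × (Fin s → ℝ)) →L[ℝ] (Fin m₂ → ℝ))
    (DZ : ((Fin n → ℝ) × (Fin s → ℝ)) →L[ℝ] (Fin s → ℝ))
    (act : Fin m₂ → Prop) (alph : Fin s → Prop) (τ : Fin s → ℝ)
    (u : Fin n → ℝ) (w : Fin s → ℝ) :
    AMap DE DI DZ act alph τ (u, w) =
      (DE (u, fun i => τ i * w i), fun j => DI (u, fun i => τ i * w i) j.1,
        DZ (u, fun i => τ i * w i) - w, fun i => w i.1) := rfl

lemma PhiMap_hasStrict {cE : (Fin n → ℝ) × (Fin s → ℝ) → Fin m₁ → ℝ}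
    {cI : (Fin n → ℝ) × (Fin s → ℝ) → Fin m₂ → ℝ}
    {cZ : (Fin n → ℝ) × (Fin s → ℝ) → Fin s → ℝ}
    (act : Fin m₂ → Prop) (alph : Fin s → Prop) (τ : Fin s → ℝ)
    {DE DI DZ} {x₀ : (Fin n → ℝ) × (Fin s → ℝ)}
    (hE : HasStrictFDerivAt cE DE (Lmap n τ x₀))
    (hI : HasStrictFDerivAt cI DI (Lmap n τ x₀))
    (hZ : HasStrictFDerivAt cZ DZ (Lmap n τ x₀)) :
    HasStrictFDerivAt (PhiMap cE cI cZ act alph τ) (AMap DE DI DZ act alph τ) x₀ := by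
  refine HasStrictFDerivAt.prodMk ?_ (HasStrictFDerivAt.prodMk ?_ (HasStrictFDerivAt.prodMk ?_ ?_))
  · exact hE.comp x₀ (Lmap n τ).hasStrictFDerivAt
  · exact ((restr act).hasStrictFDerivAt).comp x₀ (hI.comp x₀ (Lmap n τ).hasStrictFDerivAt)
  · exact (hZ.comp x₀ (Lmap n τ).hasStrictFDerivAt).sub hasStrictFDerivAt_snd
  · have h4 : HasStrictFDerivAt
        (fun q : (Fin n → ℝ) × (Fin s → ℝ) => restr alph q.2)
        ((restr alph).comp (ContinuousLinearMap.snd ℝ (Fin n → ℝ) (Fin s → ℝ))) x₀ :=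
      ((restr alph).hasStrictFDerivAt).comp x₀ hasStrictFDerivAt_snd
    exact h4

/-- embedding of a vector indexed by `alph` into `Fin s`, scaled by `δ` -/
def embA (alph : Fin s → Prop) (δ : Fin s → ℝ) (d : {i // alph i} → ℝ) : Fin s → ℝ :=
  fun i => if h : alph i then δ i * d ⟨i, h⟩ else 0

/-- the correction term relating two branch derivatives -/
def NcorrMap (DE : ((Fin n → ℝ) × (Fin s → ℝ)) →L[ℝ] (Fin m₁ → ℝ))
    (DI : ((Fin n → ℝ) × (Fin s → ℝ)) →L[ℝ] (Fin m₂ → ℝ))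
    (DZ : ((Fin n → ℝ) × (Fin s → ℝ)) →L[ℝ] (Fin s → ℝ))
    (act : Fin m₂ → Prop) (alph : Fin s → Prop) (δ : Fin s → ℝ)
    (d : {i // alph i} → ℝ) :
    (Fin m₁ → ℝ) × ({j // act j} → ℝ) × (Fin s → ℝ) × ({i // alph i} → ℝ) :=
  (DE (0, embA alph δ d), fun j => DI (0, embA alph δ d) j.1, DZ (0, embA alph δ d), 0)

lemma AMap_diff (DE : ((Fin n → ℝ) × (Fin s → ℝ)) →L[ℝ] (Fin m₁ → ℝ))
    (DI : ((Fin n → ℝ) × (Fin s → ℝ)) →L[ℝ] (Fin m₂ → ℝ))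
    (DZ : ((Fin n → ℝ) × (Fin s → ℝ)) →L[ℝ] (Fin s → ℝ))
    (act : Fin m₂ → Prop) (alph : Fin s → Prop) {τ σ' : Fin s → ℝ}
    (hτσ : ∀ i, ¬ alph i → τ i = σ' i) (q : (Fin n → ℝ) × (Fin s → ℝ)) :
    AMap DE DI DZ act alph τ q = AMap DE DI DZ act alph σ' q +
      NcorrMap DE DI DZ act alph (fun i => τ i - σ' i) (fun i => q.2 i.1) := by
  have harg : (q.1, fun i => τ i * q.2 i) = ((q.1, fun i => σ' i * q.2 i) :
      (Fin n → ℝ) × (Fin s → ℝ)) + (0, embA alph (fun i => τ i - σ' i) (fun i : {i // alph i} => q.2 i.1)) := by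
    refine Prod.ext (by simp) ?_
    funext i
    by_cases h : alph i
    · simp only [Prod.snd_add, Pi.add_apply, embA, dif_pos h]
      ring
    · simp only [Prod.snd_add, Pi.add_apply, embA, dif_neg h, hτσ i h]
      ring
  simp only [AMap_apply, NcorrMap, Prod.mk_add_mk, Prod.mk.injEq]
  refine ⟨?_, ?_, ?_, by simp⟩
  · rw [harg, map_add]
  · funext j
    rw [harg, map_add]
    simp
  · rw [harg, map_add]
    abel

lemma AMap_surj_transfer
    (DE : ((Fin n → ℝ) × (Fin s → ℝ)) →L[ℝ] (Fin m₁ → ℝ))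
    (DI : ((Fin n → ℝ) × (Fin s → ℝ)) →L[ℝ] (Fin m₂ → ℝ))
    (DZ : ((Fin n → ℝ) × (Fin s → ℝ)) →L[ℝ] (Fin s → ℝ))
    (act : Fin m₂ → Prop) (alph : Fin s → Prop) {τ σ' : Fin s → ℝ}
    (hτσ : ∀ i, ¬ alph i → τ i = σ' i)
    (h : Function.Surjective (AMap DE DI DZ act alph σ')) :
    Function.Surjective (AMap DE DI DZ act alph τ) := by
  intro y
  obtain ⟨x, hx⟩ := h (y - NcorrMap DE DI DZ act alph (fun i => τ i - σ' i) y.2.2.2)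
  refine ⟨x, ?_⟩
  have hα : (fun i : {i // alph i} => x.2 i.1) = y.2.2.2 := by
    have := congrArg (fun z => z.2.2.2) hx
    simpa [AMap_apply, NcorrMap] using this
  rw [AMap_diff DE DI DZ act alph hτσ, hx, hα]
  abel

end AuxDefs

section MatrixAux

lemma single_eq_ite {k : ℕ} (i : Fin k) :
    (Pi.single i (1:ℝ)) = (fun j => if i = j then (1:ℝ) else 0) := by
  funext j
  simp [Pi.single_apply, eq_comm]

lemma clm_decomp {n s m : ℕ} (D : ((Fin n → ℝ) × (Fin s → ℝ)) →L[ℝ] (Fin m → ℝ))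
    (u : Fin n → ℝ) (w : Fin s → ℝ) :
    D (u, w) = (Matrix.of fun i j => D (Pi.single j 1, 0) i) *ᵥ u
      + (Matrix.of fun i j => D (0, Pi.single j 1) i) *ᵥ w := by
  have h1 : (u, w) = ((u, 0) : (Fin n → ℝ) × (Fin s → ℝ)) + (0, w) := by simp
  have e1 : D (u, (0 : Fin s → ℝ)) = ∑ j, u j • D (Pi.single j 1, (0 : Fin s → ℝ)) := by
    have h := LinearMap.pi_apply_eq_sum_univ
      ((D : ((Fin n → ℝ) × (Fin s → ℝ)) →ₗ[ℝ] (Fin m → ℝ)).comp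
        (LinearMap.inl ℝ (Fin n → ℝ) (Fin s → ℝ))) u
    simp only [LinearMap.comp_apply, LinearMap.inl_apply, ContinuousLinearMap.coe_coe,
      ← single_eq_ite] at h
    exact h
  have e2 : D ((0 : Fin n → ℝ), w) = ∑ j, w j • D ((0 : Fin n → ℝ), Pi.single j 1) := by
    have h := LinearMap.pi_apply_eq_sum_univ
      ((D : ((Fin n → ℝ) × (Fin s → ℝ)) →ₗ[ℝ] (Fin m → ℝ)).comp
        (LinearMap.inr ℝ (Fin n → ℝ) (Fin s → ℝ))) w
    simp only [LinearMap.comp_apply, LinearMap.inr_apply, ContinuousLinearMap.coe_coe,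
      ← single_eq_ite] at h
    exact h
  rw [h1, map_add, e1, e2]
  congr 1
  · funext i
    rw [Finset.sum_apply]
    simp [Matrix.mulVec, dotProduct, mul_comm]
  · funext i
    rw [Finset.sum_apply]
    simp [Matrix.mulVec, dotProduct, mul_comm]

lemma inv_facts {s : ℕ} (N : Matrix (Fin s) (Fin s) ℝ) (h : ∀ i j, i ≤ j → N i j = 0) :
    (1 - N) * (1 - N)⁻¹ = 1 ∧ (1 - N)⁻¹ * (1 - N) = 1 := by
  have hdet : (1 - N).det = 1 := by
    have htri : (1 - N).BlockTriangular OrderDual.toDual := by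
      intro i j hij
      have hij' : i < j := hij
      simp [Matrix.sub_apply, Matrix.one_apply_ne (ne_of_lt hij'), h i j hij'.le]
    rw [Matrix.det_of_lowerTriangular _ htri]
    have : ∀ i, (1 - N) i i = 1 := fun i => by
      simp [Matrix.sub_apply, Matrix.one_apply_eq, h i i le_rfl]
    simp [this]
  constructor
  · exact Matrix.mul_nonsing_inv _ (by simp [hdet])
  · exact Matrix.nonsing_inv_mul _ (by simp [hdet])

lemma sel_mul_mulVec {k : ℕ} (p : Fin k → Prop) {o : Type*} [Fintype o]
    (X : Matrix (Fin k) o ℝ) (u : o → ℝ) (j : {i // p i}) :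
    ((sel p * X) *ᵥ u) j = (X *ᵥ u) j.1 := by
  simp [Matrix.mulVec, dotProduct, Matrix.mul_apply, sel, ite_mul, one_mul, zero_mul]

lemma matrix_surj_of_rank {m' : Type*} [Fintype m'] {n' : ℕ} (B : Matrix m' (Fin n') ℝ)
    (h : B.rank = Fintype.card m') : Function.Surjective B.mulVecLin := by
  have htop : LinearMap.range B.mulVecLin = ⊤ := by
    apply Submodule.eq_top_of_finrank_eq
    have : Matrix.rank B = Module.finrank ℝ (LinearMap.range B.mulVecLin) := rfl
    rw [← this, h, Module.finrank_pi]
  exact LinearMap.range_eq_top.mp htop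

lemma sign_mul_self' (x : ℝ) : Real.sign x * x = |x| := by
  rcases lt_trichotomy x 0 with h|h|h
  · rw [Real.sign_of_neg h, abs_of_neg h]; ring
  · simp [h]
  · rw [Real.sign_of_pos h, abs_of_pos h]; ring

lemma sign_sq {x : ℝ} (hx : x ≠ 0) : Real.sign x * Real.sign x = 1 := by
  rcases Real.sign_apply_eq_of_ne_zero x hx with h|h <;> rw [h] <;> norm_num

lemma single_eq_ite' {ι : Type*} [DecidableEq ι] (i : ι) :
    (Pi.single i (1:ℝ)) = (fun j => if i = j then (1:ℝ) else 0) := by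
  funext j
  simp [Pi.single_apply, eq_comm]

lemma sum_mul_dite {k : ℕ} (p : Fin k → Prop) [DecidablePred p] (g : Fin k → ℝ)
    (h : {i // p i} → ℝ) :
    (∑ i, g i * (if hp : p i then h ⟨i, hp⟩ else 0)) = ∑ j : {i // p i}, g j.1 * h j := by
  classical
  have h1 : ∑ i ∈ Finset.univ.filter p, g i * (if hp : p i then h ⟨i, hp⟩ else 0)
      = ∑ j : {i // p i}, g j.1 * h j := by
    rw [Finset.sum_subtype (p := p) (Finset.univ.filter p) (fun x => by simp)
      (fun i => g i * (if hp : p i then h ⟨i, hp⟩ else 0))]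
    exact Finset.sum_congr rfl (fun j _ => by rw [dif_pos j.2])
  rw [← h1]
  refine (Finset.sum_filter_of_ne ?_).symm
  intro x _ hx
  by_contra hpx
  rw [dif_neg hpx, mul_zero] at hx
  exact hx rfl

lemma sum_single_subtype {k : ℕ} (p : Fin k → Prop) [DecidablePred p] (i : Fin k)
    (c : ℝ) (h : {j // p j} → ℝ) :
    (∑ j : {j // p j}, (Pi.single i c : Fin k → ℝ) j.1 * h j) = if hp : p i then c * h ⟨i, hp⟩ else 0 := by
  classical
  by_cases hp : p i
  · rw [dif_pos hp]
    rw [Finset.sum_eq_single (⟨i, hp⟩ : {j // p j})]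
    · simp
    · rintro ⟨j, hj⟩ _ hne
      have hji : j ≠ i := fun hji => hne (by subst hji; rfl)
      simp [Pi.single_apply, hji]
    · intro habs; exact absurd (Finset.mem_univ _) habs
  · rw [dif_neg hp]
    apply Finset.sum_eq_zero
    rintro ⟨j, hj⟩ _
    have hji : j ≠ i := fun hji => hp (hji ▸ hj)
    simp [Pi.single_apply, hji]

lemma sum_single_mul {ι : Type*} [Fintype ι] [DecidableEq ι] (i : ι) (c : ℝ) (h : ι → ℝ) :
    (∑ l, (Pi.single i c : ι → ℝ) l * h l) = c * h i := by
  classical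
  rw [Finset.sum_eq_single i]
  · simp
  · intro l _ hne
    simp [Pi.single_apply, hne]
  · intro habs; exact absurd (Finset.mem_univ _) habs

lemma transpose_mulVec_apply {a b : ℕ} (X : Matrix (Fin a) (Fin b) ℝ) (l : Fin a → ℝ)
    (j : Fin b) : (Xᵀ *ᵥ l) j = ∑ i, X i j * l i := by
  simp [Matrix.mulVec, dotProduct, Matrix.transpose_apply]

end MatrixAux

theorem arc_ineq {E F : Type*} [NormedAddCommGroup E] [NormedSpace ℝ E] [FiniteDimensional ℝ E]
    [NormedAddCommGroup F] [NormedSpace ℝ F] [FiniteDimensional ℝ F]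
    {Φ : E → F} {A : E →L[ℝ] F} {x₀ : E} (hΦ : HasStrictFDerivAt Φ A x₀)
    (hsurj : Function.Surjective A) (hΦ0 : Φ x₀ = 0)
    {f : E → ℝ} {f' : E →L[ℝ] ℝ} (hf : HasFDerivAt f f' x₀)
    {S : Set E} (hmin : IsLocalMinOn f S x₀)
    {e : F} {v : E} (hv : A v = e)
    (hS : ∀ᶠ x in 𝓝 x₀, (∃ c : ℝ, 0 ≤ c ∧ Φ x = c • e) → x ∈ S) :
    0 ≤ f' v := by
  classical
  have hcc : (LinearMap.ker (A : E →ₗ[ℝ] F)).ClosedComplemented := by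
    exact A.ker_closedComplemented_of_finiteDimensional_range
  obtain ⟨π, hπ⟩ := hcc
  set H : E → F × (LinearMap.ker (A : E →ₗ[ℝ] F)) := fun x => (Φ x, π x) with hH
  have hbij : Function.Bijective (A.prod π) := by
    constructor
    · intro x y hxy
      have h1 : A x = A y := congrArg Prod.fst hxy
      have h2 : π x = π y := congrArg Prod.snd hxy
      have hxyK : x - y ∈ LinearMap.ker (A : E →ₗ[ℝ] F) := by simp [LinearMap.mem_ker, map_sub, h1]
      have h4 : π (x - y) = ⟨x - y, hxyK⟩ := hπ ⟨x - y, hxyK⟩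
      have h3 : π (x - y) = 0 := by simp [map_sub, h2]
      rw [h3] at h4
      have : x - y = 0 := by
        have := congrArg (Subtype.val) h4; simpa using this.symm
      exact sub_eq_zero.mp this
    · rintro ⟨y, k⟩
      obtain ⟨x₁, hx₁⟩ := hsurj y
      refine ⟨x₁ - ((π x₁ : LinearMap.ker (A : E →ₗ[ℝ] F)) : E) + (k : E), ?_⟩
      have hk : A (k : E) = 0 := k.2
      have hπx₁ : A ((π x₁ : LinearMap.ker (A : E →ₗ[ℝ] F)) : E) = 0 := (π x₁).2
      have e1 : A (x₁ - ((π x₁ : LinearMap.ker (A : E →ₗ[ℝ] F)) : E) + (k : E)) = y := by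
        simp [map_add, map_sub, hx₁, hk, hπx₁]
      have e2 : π (x₁ - ((π x₁ : LinearMap.ker (A : E →ₗ[ℝ] F)) : E) + (k : E)) = k := by
        have p1 : π ((π x₁ : LinearMap.ker (A : E →ₗ[ℝ] F)) : E) = π x₁ := hπ (π x₁)
        have p2 : π (k : E) = k := hπ k
        simp [map_add, map_sub, p1, p2]
      exact Prod.ext e1 e2
  -- upgrade to a continuous linear equivalence
  let eqL : E ≃ₗ[ℝ] F × (LinearMap.ker (A : E →ₗ[ℝ] F)) := LinearEquiv.ofBijective (A.prod π).toLinearMap hbij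
  let eL : E ≃L[ℝ] F × (LinearMap.ker (A : E →ₗ[ℝ] F)) := eqL.toContinuousLinearEquiv
  have heL : (eL : E →L[ℝ] F × (LinearMap.ker (A : E →ₗ[ℝ] F))) = A.prod π := by
    ext x <;> rfl
  have hHstrict : HasStrictFDerivAt H (eL : E →L[ℝ] F × (LinearMap.ker (A : E →ₗ[ℝ] F))) x₀ := by
    rw [heL]
    exact hΦ.prodMk π.hasStrictFDerivAt
  -- the curve
  set c : ℝ → F × (LinearMap.ker (A : E →ₗ[ℝ] F)) := fun t => (t • e, π x₀ + t • π v) with hc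
  have hc0 : c 0 = H x₀ := by simp [hc, hH, hΦ0]
  have hcderiv : HasDerivAt c (e, π v) 0 := by
    have h1 : HasDerivAt (fun t : ℝ => t • e) e 0 := by
      simpa using (hasDerivAt_id (0:ℝ)).smul_const e
    have h2 : HasDerivAt (fun t : ℝ => π x₀ + t • π v) (π v) 0 := by
      simpa using ((hasDerivAt_id (0:ℝ)).smul_const (π v)).const_add (π x₀)
    exact h1.prodMk h2
  set inv : F × (LinearMap.ker (A : E →ₗ[ℝ] F)) → E := hHstrict.localInverse H _ x₀ with hinv
  set γ : ℝ → E := fun t => inv (c t) with hγ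
  have hγ0 : γ 0 = x₀ := by
    rw [hγ]; simp only [hc0]
    exact hHstrict.localInverse_apply_image
  have hγderiv : HasDerivAt γ v 0 := by
    have hli : HasFDerivAt inv (eL.symm : F × (LinearMap.ker (A : E →ₗ[ℝ] F)) →L[ℝ] E) (c 0) := by
      rw [hc0]; exact hHstrict.to_localInverse.hasFDerivAt
    have := hli.comp_hasDerivAt 0 hcderiv
    have hsymm : eL.symm (e, π v) = v := by
      rw [ContinuousLinearEquiv.symm_apply_eq]
      have : eL v = (A.prod π) v := by rw [← heL]; rfl
      rw [this]; exact Prod.ext hv.symm rfl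
    have h' : HasDerivAt (inv ∘ c) v 0 := by simpa [hsymm] using this
    exact h'
  -- eventual properties along the curve
  have hri : ∀ᶠ y in 𝓝 (H x₀), H (inv y) = y := hHstrict.eventually_right_inverse
  have hctend : Filter.Tendsto c (𝓝 0) (𝓝 (H x₀)) := by
    have := hcderiv.continuousAt.tendsto
    rwa [hc0] at this
  have hev1 : ∀ᶠ t in 𝓝 (0:ℝ), H (γ t) = c t := hctend.eventually hri
  have hγtend : Filter.Tendsto γ (𝓝 0) (𝓝 x₀) := by
    have := hγderiv.continuousAt.tendsto
    rwa [hγ0] at this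
  have hev2 : ∀ᶠ t in 𝓝 (0:ℝ), ((∃ c' : ℝ, 0 ≤ c' ∧ Φ (γ t) = c' • e) → γ t ∈ S) :=
    hγtend.eventually hS
  have hmin' : ∀ᶠ x in 𝓝 x₀, x ∈ S → f x₀ ≤ f x := by
    have := hmin
    rwa [IsLocalMinOn, IsMinFilter, eventually_nhdsWithin_iff] at this
  have hev3 : ∀ᶠ t in 𝓝 (0:ℝ), (γ t ∈ S → f x₀ ≤ f (γ t)) := hγtend.eventually hmin'
  have hkey : ∀ᶠ t in 𝓝[≥] (0:ℝ), f x₀ ≤ f (γ t) := by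
    have hall : ∀ᶠ t in 𝓝[≥] (0:ℝ),
        (H (γ t) = c t ∧ ((∃ c' : ℝ, 0 ≤ c' ∧ Φ (γ t) = c' • e) → γ t ∈ S) ∧
          (γ t ∈ S → f x₀ ≤ f (γ t))) ∧ t ∈ Ici (0:ℝ) :=
      ((((hev1.and hev2).and hev3).mono (fun t h => ⟨h.1.1, h.1.2, h.2⟩)).filter_mono
        nhdsWithin_le_nhds).and eventually_mem_nhdsWithin
    refine hall.mono ?_
    rintro t ⟨⟨h1, h2, h3⟩, ht⟩
    have hΦγ : Φ (γ t) = t • e := congrArg Prod.fst h1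
    exact h3 (h2 ⟨t, ht, hΦγ⟩)
  -- one-sided derivative argument
  have hψ : HasDerivAt (fun t => f (γ t)) (f' v) 0 := by
    have hf' : HasFDerivAt f f' (γ 0) := by rwa [hγ0]
    exact hf'.comp_hasDerivAt 0 hγderiv
  have hslope : Filter.Tendsto (slope (fun t => f (γ t)) 0) (𝓝[>] (0:ℝ)) (𝓝 (f' v)) := by
    have := hasDerivAt_iff_tendsto_slope.mp hψ
    exact this.mono_left (nhdsWithin_mono _ (fun x hx => ne_of_gt hx))
  have hpos : ∀ᶠ t in 𝓝[>] (0:ℝ), 0 ≤ slope (fun t => f (γ t)) 0 t := by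
    have h1 : ∀ᶠ t in 𝓝[>] (0:ℝ), f x₀ ≤ f (γ t) :=
      hkey.filter_mono (nhdsWithin_mono _ Ioi_subset_Ici_self)
    have h2 : ∀ᶠ t in 𝓝[>] (0:ℝ), t ∈ Ioi (0:ℝ) := eventually_mem_nhdsWithin
    refine (h1.and h2).mono ?_
    rintro t ⟨h1, h2⟩
    have hfγ0 : f (γ 0) = f x₀ := by rw [hγ0]
    simp only [slope_def_field, div_eq_mul_inv, sub_zero]
    have : 0 ≤ f (γ t) - f (γ 0) := by rw [hfγ0]; linarith
    have ht : (0:ℝ) < t := h2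
    positivity
  exact ge_of_tendsto hslope hpos

/-- First order necessary optimality conditions (kink stationarity) for the abs-normal
NLP under LIKQ. -/
theorem stmt10 {n s m₁ m₂ : ℕ}
    (Dt : Set (Fin n → ℝ)) (Dz : Set (Fin s → ℝ))
    (hDt : IsOpen Dt) (hDz : IsOpen Dz)
    (hsym : ∀ z ∈ Dz, ∀ σ : Fin s → ℝ, (∀ i, σ i = -1 ∨ σ i = 0 ∨ σ i = 1) →
      (fun i => σ i * z i) ∈ Dz)
    (f : (Fin n → ℝ) → ℝ)
    (cE : (Fin n → ℝ) × (Fin s → ℝ) → Fin m₁ → ℝ)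
    (cI : (Fin n → ℝ) × (Fin s → ℝ) → Fin m₂ → ℝ)
    (cZ : (Fin n → ℝ) × (Fin s → ℝ) → Fin s → ℝ)
    (hf : ContDiffOn ℝ 1 f Dt)
    (hcE : ContDiffOn ℝ 1 cE (Dt ×ˢ Dz))
    (hcI : ContDiffOn ℝ 1 cI (Dt ×ˢ Dz))
    (hcZ : ContDiffOn ℝ 1 cZ (Dt ×ˢ Dz))
    (hlow : ∀ p ∈ Dt ×ˢ Dz, ∀ i j : Fin s, i ≤ j → jac2 cZ p i j = 0)
    (tstar : Fin n → ℝ) (zstar : Fin s → ℝ)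
    (ht : tstar ∈ Dt) (hz : zstar ∈ Dz)
    (hfeasE : cE (tstar, vabs zstar) = 0)
    (hfeasI : ∀ j, 0 ≤ cI (tstar, vabs zstar) j)
    (hfeasZ : cZ (tstar, vabs zstar) = zstar)
    (hmin : IsLocalMinOn (fun q : (Fin n → ℝ) × (Fin s → ℝ) => f q.1)
      {q | q.1 ∈ Dt ∧ q.2 ∈ Dz ∧ cE (q.1, vabs q.2) = 0 ∧
        (∀ j, 0 ≤ cI (q.1, vabs q.2) j) ∧ cZ (q.1, vabs q.2) = q.2}
      (tstar, zstar))
    (hLIKQ :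
      (Matrix.fromRows
        (jac1 cE (tstar, vabs zstar) +
          jac2 cE (tstar, vabs zstar) * Matrix.diagonal (fun i => Real.sign (zstar i)) *
          ((1 - jac2 cZ (tstar, vabs zstar) *
              Matrix.diagonal (fun i => Real.sign (zstar i)))⁻¹ *
            jac1 cZ (tstar, vabs zstar)))
        (Matrix.fromRows
          (sel (fun j => cI (tstar, vabs zstar) j = 0) *
            (jac1 cI (tstar, vabs zstar) +
              jac2 cI (tstar, vabs zstar) * Matrix.diagonal (fun i => Real.sign (zstar i)) *
              ((1 - jac2 cZ (tstar, vabs zstar) *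
                  Matrix.diagonal (fun i => Real.sign (zstar i)))⁻¹ *
                jac1 cZ (tstar, vabs zstar))))
          (sel (fun i => zstar i = 0) *
            ((1 - jac2 cZ (tstar, vabs zstar) *
                Matrix.diagonal (fun i => Real.sign (zstar i)))⁻¹ *
              jac1 cZ (tstar, vabs zstar))))).rank
      = m₁ + Fintype.card {j // cI (tstar, vabs zstar) j = 0} +
          Fintype.card {i // zstar i = 0}) :
    ∃ (lE : Fin m₁ → ℝ) (lI : Fin m₂ → ℝ) (lZ : Fin s → ℝ),
      (fun j => fderiv ℝ f tstar (Pi.single j 1)) +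
        (jac1 cE (tstar, vabs zstar))ᵀ *ᵥ lE -
        (jac1 cI (tstar, vabs zstar))ᵀ *ᵥ lI +
        (jac1 cZ (tstar, vabs zstar))ᵀ *ᵥ lZ = 0 ∧
      (∀ i, zstar i = 0 →
        |lZ i| ≤ ((jac2 cE (tstar, vabs zstar))ᵀ *ᵥ lE -
          (jac2 cI (tstar, vabs zstar))ᵀ *ᵥ lI +
          (jac2 cZ (tstar, vabs zstar))ᵀ *ᵥ lZ) i) ∧
      (∀ i, zstar i ≠ 0 →
        ((jac2 cE (tstar, vabs zstar))ᵀ *ᵥ lE -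
          (jac2 cI (tstar, vabs zstar))ᵀ *ᵥ lI +
          (jac2 cZ (tstar, vabs zstar))ᵀ *ᵥ lZ) i = Real.sign (zstar i) * lZ i) ∧
      (∀ j, 0 ≤ lI j) ∧
      lI ⬝ᵥ cI (tstar, vabs zstar) = 0 := by
  classical
  set σf : Fin s → ℝ := fun i => Real.sign (zstar i) with hσf
  set pstar : (Fin n → ℝ) × (Fin s → ℝ) := (tstar, vabs zstar) with hpstar
  set act : Fin m₂ → Prop := fun j => cI pstar j = 0 with hact
  set alph : Fin s → Prop := fun i => zstar i = 0 with halph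
  set x₀ : (Fin n → ℝ) × (Fin s → ℝ) := (tstar, zstar) with hx₀
  -- basic membership facts
  have hσabs : ∀ i, σf i * zstar i = |zstar i| := fun i => sign_mul_self' _
  have hzd : vabs zstar ∈ Dz := by
    have h := hsym zstar hz σf (fun i => Real.sign_apply_eq (zstar i))
    have heq : (fun i => σf i * zstar i) = vabs zstar := by
      funext i; exact hσabs i
    rwa [heq] at h
  have hpmem : pstar ∈ Dt ×ˢ Dz := by
    rw [hpstar]; exact Set.mk_mem_prod ht hzd
  have hopen : IsOpen (Dt ×ˢ Dz) := hDt.prod hDz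
  have hnhds : Dt ×ˢ Dz ∈ 𝓝 pstar := hopen.mem_nhds hpmem
  -- strict derivatives
  set DE := fderiv ℝ cE pstar with hDEdef
  set DI := fderiv ℝ cI pstar with hDIdef
  set DZ := fderiv ℝ cZ pstar with hDZdef
  have hDEs : HasStrictFDerivAt cE DE pstar :=
    (hcE.contDiffAt hnhds).hasStrictFDerivAt one_ne_zero
  have hDIs : HasStrictFDerivAt cI DI pstar :=
    (hcI.contDiffAt hnhds).hasStrictFDerivAt one_ne_zero
  have hDZs : HasStrictFDerivAt cZ DZ pstar :=
    (hcZ.contDiffAt hnhds).hasStrictFDerivAt one_ne_zero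
  have hLx : ∀ τ : Fin s → ℝ, (∀ i, τ i * zstar i = |zstar i|) → Lmap n τ x₀ = pstar := by
    intro τ hτ
    rw [hpstar, hx₀]
    refine Prod.ext rfl ?_
    funext i
    exact hτ i
  have hPhistrict : ∀ τ : Fin s → ℝ, (∀ i, τ i * zstar i = |zstar i|) →
      HasStrictFDerivAt (PhiMap cE cI cZ act alph τ) (AMap DE DI DZ act alph τ) x₀ := by
    intro τ hτ
    refine PhiMap_hasStrict act alph τ ?_ ?_ ?_ <;> rw [hLx τ hτ]
    exacts [hDEs, hDIs, hDZs]
  have hPhizero : ∀ τ : Fin s → ℝ, (∀ i, τ i * zstar i = |zstar i|) →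
      PhiMap cE cI cZ act alph τ x₀ = 0 := by
    intro τ hτ
    show (cE (Lmap n τ x₀), fun j : {j // act j} => cI (Lmap n τ x₀) j.1,
      cZ (Lmap n τ x₀) - x₀.2, fun i : {i // alph i} => x₀.2 i.1) = 0
    rw [hLx τ hτ]
    refine Prod.ext ?_ (Prod.ext ?_ (Prod.ext ?_ ?_))
    · exact hfeasE
    · funext j; exact j.2
    · show cZ pstar - zstar = 0
      rw [hfeasZ]; simp
    · funext i; exact i.2
  set φd := (fderiv ℝ f tstar).comp (ContinuousLinearMap.fst ℝ (Fin n → ℝ) (Fin s → ℝ))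
    with hφd
  have hφ : HasFDerivAt (fun q : (Fin n → ℝ) × (Fin s → ℝ) => f q.1) φd x₀ := by
    have hft : HasFDerivAt f (fderiv ℝ f tstar) tstar :=
      ((hf.contDiffAt (hDt.mem_nhds ht)).hasStrictFDerivAt one_ne_zero).hasFDerivAt
    exact hft.comp x₀ hasFDerivAt_fst
  -- the matrices
  set J1E := jac1 cE pstar with hJ1E
  set J2E := jac2 cE pstar with hJ2E
  set J1I := jac1 cI pstar with hJ1I
  set J2I := jac2 cI pstar with hJ2I
  set J1Z := jac1 cZ pstar with hJ1Z
  set J2Z := jac2 cZ pstar with hJ2Z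
  set Sm : Matrix (Fin s) (Fin s) ℝ := Matrix.diagonal σf with hSm
  set Mm : Matrix (Fin s) (Fin s) ℝ := 1 - J2Z * Sm with hMm
  have hMfacts : Mm * Mm⁻¹ = 1 ∧ Mm⁻¹ * Mm = 1 := by
    refine inv_facts (J2Z * Sm) ?_
    intro i j hij
    rw [Matrix.mul_diagonal]
    rw [hJ2Z]
    rw [hlow pstar hpmem i j hij]
    ring
  -- the LIKQ matrix
  set B : Matrix (Fin m₁ ⊕ ({j // act j} ⊕ {i // alph i})) (Fin n) ℝ :=
    Matrix.fromRows (J1E + J2E * Sm * (Mm⁻¹ * J1Z))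
      (Matrix.fromRows (sel act * (J1I + J2I * Sm * (Mm⁻¹ * J1Z)))
        (sel alph * (Mm⁻¹ * J1Z))) with hB
  have hBsurj : Function.Surjective B.mulVecLin := by
    apply matrix_surj_of_rank
    rw [hLIKQ]
    simp [Fintype.card_sum, add_assoc]
    congr 1 <;> exact Fintype.card_congr (Equiv.refl _)
  -- decomposition of the derivative maps into matrices
  have hdecompE : ∀ (u : Fin n → ℝ) (w : Fin s → ℝ), DE (u, w) = J1E *ᵥ u + J2E *ᵥ w :=
    fun u w => clm_decomp DE u w
  have hdecompI : ∀ (u : Fin n → ℝ) (w : Fin s → ℝ), DI (u, w) = J1I *ᵥ u + J2I *ᵥ w :=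
    fun u w => clm_decomp DI u w
  have hdecompZ : ∀ (u : Fin n → ℝ) (w : Fin s → ℝ), DZ (u, w) = J1Z *ᵥ u + J2Z *ᵥ w :=
    fun u w => clm_decomp DZ u w
  have hσw : ∀ w : Fin s → ℝ, (fun i => σf i * w i) = Sm *ᵥ w := by
    intro w; funext i; rw [hSm, Matrix.mulVec_diagonal]
  -- surjectivity of the branch derivative for the base sign vector
  have hsurj0 : Function.Surjective (AMap DE DI DZ act alph σf) := by
    rintro ⟨a, b, c, d⟩
    obtain ⟨u, hu⟩ := hBsurj (Sum.elim (fun i => a i + ((J2E * Sm * Mm⁻¹) *ᵥ c) i)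
      (Sum.elim (fun j => b j + ((J2I * Sm * Mm⁻¹) *ᵥ c) j.1)
        (fun i => d i + (Mm⁻¹ *ᵥ c) i.1)))
    rw [Matrix.mulVecLin_apply] at hu
    set w : Fin s → ℝ := Mm⁻¹ *ᵥ (J1Z *ᵥ u - c) with hw
    have hMw : Mm *ᵥ w = J1Z *ᵥ u - c := by
      rw [hw, Matrix.mulVec_mulVec, hMfacts.1, Matrix.one_mulVec]
    have hJZw : J2Z *ᵥ (Sm *ᵥ w) = w - (J1Z *ᵥ u - c) := by
      have h5 : (J2Z * Sm) *ᵥ w = w - Mm *ᵥ w := by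
        rw [hMm, Matrix.sub_mulVec, Matrix.one_mulVec]; abel
      rw [Matrix.mulVec_mulVec, h5, hMw]
    have huE : ∀ i, (B *ᵥ u) (Sum.inl i) = a i + ((J2E * Sm * Mm⁻¹) *ᵥ c) i := by
      intro i; rw [hu]; rfl
    have huI : ∀ j, (B *ᵥ u) (Sum.inr (Sum.inl j)) = b j + ((J2I * Sm * Mm⁻¹) *ᵥ c) j.1 := by
      intro j; rw [hu]; rfl
    have huα : ∀ i, (B *ᵥ u) (Sum.inr (Sum.inr i)) = d i + (Mm⁻¹ *ᵥ c) i.1 := by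
      intro i; rw [hu]; rfl
    refine ⟨(u, w), ?_⟩
    rw [AMap_apply]
    refine Prod.ext ?_ (Prod.ext ?_ (Prod.ext ?_ ?_))
    · show DE (u, fun i => σf i * w i) = a
      rw [hdecompE, hσw]
      funext i
      have h1 := huE i
      rw [hB, Matrix.fromRows_mulVec] at h1
      simp only [Sum.elim_inl] at h1
      rw [Matrix.add_mulVec] at h1
      have h2 : J2E *ᵥ (Sm *ᵥ w) = (J2E * Sm * Mm⁻¹) *ᵥ (J1Z *ᵥ u - c) := by
        rw [hw, Matrix.mulVec_mulVec, Matrix.mulVec_mulVec, Matrix.mul_assoc]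
      have h3 : ((J2E * Sm * (Mm⁻¹ * J1Z)) *ᵥ u) i = ((J2E * Sm * Mm⁻¹) *ᵥ (J1Z *ᵥ u)) i := by
        rw [Matrix.mulVec_mulVec, ← Matrix.mul_assoc]
      rw [Pi.add_apply] at h1
      rw [Pi.add_apply, h2, Matrix.mulVec_sub, Pi.sub_apply]
      rw [← h3]
      linarith [h1]
    · show (fun j : {j // act j} => DI (u, fun i => σf i * w i) j.1) = b
      funext j
      rw [hdecompI, hσw]
      have h1 := huI j
      rw [hB, Matrix.fromRows_mulVec] at h1
      simp only [Sum.elim_inr] at h1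
      rw [Matrix.fromRows_mulVec] at h1
      simp only [Sum.elim_inl] at h1
      rw [sel_mul_mulVec] at h1
      rw [Matrix.add_mulVec] at h1
      have h2 : J2I *ᵥ (Sm *ᵥ w) = (J2I * Sm * Mm⁻¹) *ᵥ (J1Z *ᵥ u - c) := by
        rw [hw, Matrix.mulVec_mulVec, Matrix.mulVec_mulVec, Matrix.mul_assoc]
      have h3 : ((J2I * Sm * (Mm⁻¹ * J1Z)) *ᵥ u) j.1 = ((J2I * Sm * Mm⁻¹) *ᵥ (J1Z *ᵥ u)) j.1 := by
        rw [Matrix.mulVec_mulVec, ← Matrix.mul_assoc]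
      rw [Pi.add_apply] at h1
      rw [Pi.add_apply, h2, Matrix.mulVec_sub, Pi.sub_apply]
      rw [← h3]
      linarith [h1]
    · show DZ (u, fun i => σf i * w i) - w = c
      rw [hdecompZ, hσw, hJZw]
      abel
    · show (fun i : {i // alph i} => w i.1) = d
      funext i
      have h1 := huα i
      rw [hB, Matrix.fromRows_mulVec] at h1
      simp only [Sum.elim_inr] at h1
      rw [Matrix.fromRows_mulVec] at h1
      simp only [Sum.elim_inr] at h1
      rw [sel_mul_mulVec] at h1
      have h2 : w i.1 = ((Mm⁻¹ * J1Z) *ᵥ u) i.1 - (Mm⁻¹ *ᵥ c) i.1 := by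
        rw [hw, Matrix.mulVec_sub, Matrix.mulVec_mulVec]
        simp
      rw [h2]
      linarith [h1]
  -- continuity facts
  have hIcont : ∀ j : Fin m₂, ContinuousAt (fun x : (Fin n → ℝ) × (Fin s → ℝ) =>
      cI (x.1, vabs x.2) j) x₀ := by
    intro j
    have hinner : ContinuousAt (fun x : (Fin n → ℝ) × (Fin s → ℝ) => (x.1, vabs x.2)) x₀ :=
      (continuous_fst.prodMk
        (continuous_pi fun i => ((continuous_apply i).comp continuous_snd).abs)).continuousAt
    have hcIc : ContinuousAt cI
        ((fun x : (Fin n → ℝ) × (Fin s → ℝ) => (x.1, vabs x.2)) x₀) :=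
      (hcI.contDiffAt hnhds).continuousAt
    exact (continuous_apply j).continuousAt.comp (ContinuousAt.comp hcIc hinner)
  have evmem : ∀ᶠ x : (Fin n → ℝ) × (Fin s → ℝ) in 𝓝 x₀, x.1 ∈ Dt ∧ x.2 ∈ Dz := by
    have hx₀mem : x₀ ∈ Dt ×ˢ Dz := Set.mk_mem_prod ht hz
    filter_upwards [hopen.mem_nhds hx₀mem] with x hx
    exact ⟨hx.1, hx.2⟩
  have evsign : ∀ᶠ x : (Fin n → ℝ) × (Fin s → ℝ) in 𝓝 x₀, ∀ i, ¬ alph i → 0 < σf i * x.2 i := by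
    rw [eventually_all]
    intro i
    by_cases hi : alph i
    · exact Filter.Eventually.of_forall fun x h => absurd hi h
    · have hcont : ContinuousAt (fun x : (Fin n → ℝ) × (Fin s → ℝ) => σf i * x.2 i) x₀ :=
        (continuous_const.mul ((continuous_apply i).comp continuous_snd)).continuousAt
      have hpos : 0 < σf i * zstar i := by
        rw [hσabs i]
        exact abs_pos.mpr hi
      exact (hcont.eventually (eventually_gt_nhds hpos)).mono (fun x hx _ => hx)
  have evinact : ∀ᶠ x : (Fin n → ℝ) × (Fin s → ℝ) in 𝓝 x₀,
      ∀ j, ¬ act j → 0 < cI (x.1, vabs x.2) j := by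
    rw [eventually_all]
    intro j
    by_cases hj : act j
    · exact Filter.Eventually.of_forall fun x h => absurd hj h
    · have hpos : 0 < cI pstar j := lt_of_le_of_ne (hfeasI j) (Ne.symm hj)
      exact ((hIcont j).eventually (eventually_gt_nhds hpos)).mono (fun x hx _ => hx)
  -- eventual feasibility of the branch rays
  have hfeas : ∀ (τ : Fin s → ℝ), (∀ i, τ i * zstar i = |zstar i|) →
      ∀ (eI : {j // act j} → ℝ) (eα : {i // alph i} → ℝ),
      (∀ j, 0 ≤ eI j) →
      (∀ c : ℝ, 0 ≤ c → ∀ i : {i // alph i}, τ i.1 * (c * eα i) = |c * eα i|) →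
      ∀ᶠ x : (Fin n → ℝ) × (Fin s → ℝ) in 𝓝 x₀,
        ((∃ c : ℝ, 0 ≤ c ∧ PhiMap cE cI cZ act alph τ x =
            c • ((0 : Fin m₁ → ℝ), eI, (0 : Fin s → ℝ), eα)) →
          x ∈ {q : (Fin n → ℝ) × (Fin s → ℝ) | q.1 ∈ Dt ∧ q.2 ∈ Dz ∧
            cE (q.1, vabs q.2) = 0 ∧
            (∀ j, 0 ≤ cI (q.1, vabs q.2) j) ∧ cZ (q.1, vabs q.2) = q.2}) := by
    intro τ hτ eI eα heI heα
    filter_upwards [evmem, evsign, evinact] with x hx1 hx2 hx3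
    rintro ⟨c, hc, hPhi⟩
    have hPE : cE (Lmap n τ x) = 0 := by
      have := congrArg (fun y => y.1) hPhi
      simpa [PhiMap] using this
    have hPI : ∀ j : {j // act j}, cI (Lmap n τ x) j.1 = c * eI j := by
      intro j
      have := congrArg (fun y => y.2.1 j) hPhi
      simpa [PhiMap] using this
    have hPZ : cZ (Lmap n τ x) - x.2 = 0 := by
      have := congrArg (fun y => y.2.2.1) hPhi
      simpa [PhiMap] using this
    have hPα : ∀ i : {i // alph i}, x.2 i.1 = c * eα i := by
      intro i
      have := congrArg (fun y => y.2.2.2 i) hPhi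
      simpa [PhiMap] using this
    have hkey : (fun i => τ i * x.2 i) = vabs x.2 := by
      funext i
      by_cases hi : alph i
      · have h1 : x.2 i = c * eα ⟨i, hi⟩ := hPα ⟨i, hi⟩
        show τ i * x.2 i = |x.2 i|
        rw [h1]
        exact heα c hc ⟨i, hi⟩
      · have h2 : 0 < σf i * x.2 i := hx2 i hi
        have hτi : τ i = σf i := by
          have h5 : τ i * zstar i = σf i * zstar i := by rw [hτ i, hσabs i]
          exact mul_right_cancel₀ hi h5
        show τ i * x.2 i = |x.2 i|
        rw [hτi]
        rcases Real.sign_apply_eq_of_ne_zero (zstar i) hi with h | h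
        · have hσi : σf i = -1 := h
          rw [hσi] at h2 ⊢
          have : x.2 i < 0 := by linarith
          rw [abs_of_neg this]; ring
        · have hσi : σf i = 1 := h
          rw [hσi] at h2 ⊢
          have : 0 < x.2 i := by linarith
          rw [abs_of_pos this]; ring
    have hLx2 : ((x.1, vabs x.2) : (Fin n → ℝ) × (Fin s → ℝ)) = Lmap n τ x := by
      refine Prod.ext rfl ?_
      show vabs x.2 = (fun i => τ i * x.2 i)
      exact hkey.symm
    refine ⟨hx1.1, hx1.2, ?_, ?_, ?_⟩
    · rw [hLx2]; exact hPE
    · intro j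
      by_cases hj : act j
      · rw [hLx2]
        have := hPI ⟨j, hj⟩
        rw [this]
        exact mul_nonneg hc (heI ⟨j, hj⟩)
      · exact (hx3 j hj).le
    · rw [hLx2]
      have := sub_eq_zero.mp hPZ
      exact this
  -- the linear functional ξ
  have hrange : LinearMap.range (AMap DE DI DZ act alph σf).toLinearMap = ⊤ := by
    rw [LinearMap.range_eq_top]
    exact hsurj0
  obtain ⟨r, hr⟩ := LinearMap.exists_rightInverse_of_surjective _ hrange
  have hry : ∀ y, AMap DE DI DZ act alph σf (r y) = y := by
    intro y
    have := DFunLike.congr_fun hr y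
    simpa using this
  set ξ : ((Fin m₁ → ℝ) × ({j // act j} → ℝ) × (Fin s → ℝ) × ({i // alph i} → ℝ)) →ₗ[ℝ] ℝ :=
    (φd.toLinearMap.comp r) with hξdef
  -- the arc inequality specialized
  have harc : ∀ (τ : Fin s → ℝ), (∀ i, τ i * zstar i = |zstar i|) →
      ∀ (eI : {j // act j} → ℝ) (eα : {i // alph i} → ℝ),
      (∀ j, 0 ≤ eI j) →
      (∀ c : ℝ, 0 ≤ c → ∀ i : {i // alph i}, τ i.1 * (c * eα i) = |c * eα i|) →
      ∀ v, AMap DE DI DZ act alph τ v = ((0 : Fin m₁ → ℝ), eI, (0 : Fin s → ℝ), eα) →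
      Function.Surjective (AMap DE DI DZ act alph τ) →
      0 ≤ φd v := by
    intro τ hτ eI eα heI heα v hv hsurjτ
    exact arc_ineq (hPhistrict τ hτ) hsurjτ (hPhizero τ hτ) hφ hmin hv
      (hfeas τ hτ eI eα heI heα)
  -- φd vanishes on the kernel
  have hker : ∀ v, AMap DE DI DZ act alph σf v = 0 → φd v = 0 := by
    intro v hv
    have h1 : 0 ≤ φd v := by
      refine harc σf hσabs 0 0 (fun j => le_rfl) (fun c hc i => by simp) v ?_ hsurj0
      rw [hv]; rfl
    have h2 : 0 ≤ φd (-v) := by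
      refine harc σf hσabs 0 0 (fun j => le_rfl) (fun c hc i => by simp) (-v) ?_ hsurj0
      rw [map_neg, hv, neg_zero]; rfl
    rw [map_neg] at h2
    linarith
  -- representation of φd through ξ
  have hstat : ∀ x, φd x = ξ (AMap DE DI DZ act alph σf x) := by
    intro x
    have h0 : AMap DE DI DZ act alph σf (x - r (AMap DE DI DZ act alph σf x)) = 0 := by
      rw [map_sub, hry]
      simp
    have h1 := hker _ h0
    rw [map_sub] at h1
    have h2 : φd x = φd (r (AMap DE DI DZ act alph σf x)) := by linarith
    rw [h2]
    rfl
  -- components of ξ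
  set ξE : Fin m₁ → ℝ := fun k => ξ (Pi.single k 1, 0, 0, 0) with hξE
  set ξI : {j // act j} → ℝ := fun j => ξ (0, Pi.single j 1, 0, 0) with hξI
  set ξZ : Fin s → ℝ := fun i => ξ (0, 0, Pi.single i 1, 0) with hξZ
  set ξα : {i // alph i} → ℝ := fun i => ξ (0, 0, 0, Pi.single i 1) with hξα
  have hexp : ∀ (yE : Fin m₁ → ℝ) (yI : {j // act j} → ℝ) (yZ : Fin s → ℝ)
      (yα : {i // alph i} → ℝ),
      ξ (yE, yI, yZ, yα) = (∑ k, yE k * ξE k) + (∑ j, yI j * ξI j)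
        + (∑ i, yZ i * ξZ i) + (∑ i, yα i * ξα i) := by
    intro yE yI yZ yα
    have hsplit : ((yE, yI, yZ, yα) :
        (Fin m₁ → ℝ) × ({j // act j} → ℝ) × (Fin s → ℝ) × ({i // alph i} → ℝ))
        = (yE, 0, 0, 0) + ((0, yI, 0, 0) + ((0, 0, yZ, 0) + (0, 0, 0, yα))) := by
      simp [Prod.ext_iff]
    rw [hsplit, map_add, map_add, map_add]
    have h1 : ξ (yE, 0, 0, 0) = ∑ k, yE k * ξE k := by
      have h := LinearMap.pi_apply_eq_sum_univ
        (ξ.comp (LinearMap.inl ℝ (Fin m₁ → ℝ)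
          (({j // act j} → ℝ) × (Fin s → ℝ) × ({i // alph i} → ℝ)))) yE
      simp only [LinearMap.comp_apply, LinearMap.inl_apply, ← single_eq_ite',
        smul_eq_mul] at h
      exact h
    have h2 : ξ (0, yI, 0, 0) = ∑ j, yI j * ξI j := by
      have h := LinearMap.pi_apply_eq_sum_univ
        (ξ.comp ((LinearMap.inr ℝ (Fin m₁ → ℝ) _).comp
          (LinearMap.inl ℝ ({j // act j} → ℝ) ((Fin s → ℝ) × ({i // alph i} → ℝ))))) yI
      simp only [LinearMap.comp_apply, LinearMap.inl_apply, LinearMap.inr_apply,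
        ← single_eq_ite', smul_eq_mul] at h
      exact h
    have h3 : ξ (0, 0, yZ, 0) = ∑ i, yZ i * ξZ i := by
      have h := LinearMap.pi_apply_eq_sum_univ
        (ξ.comp ((LinearMap.inr ℝ (Fin m₁ → ℝ) _).comp
          ((LinearMap.inr ℝ ({j // act j} → ℝ) _).comp
            (LinearMap.inl ℝ (Fin s → ℝ) ({i // alph i} → ℝ))))) yZ
      simp only [LinearMap.comp_apply, LinearMap.inl_apply, LinearMap.inr_apply,
        ← single_eq_ite', smul_eq_mul] at h
      exact h
    have h4 : ξ (0, 0, 0, yα) = ∑ i, yα i * ξα i := by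
      have h := LinearMap.pi_apply_eq_sum_univ
        (ξ.comp ((LinearMap.inr ℝ (Fin m₁ → ℝ) _).comp
          ((LinearMap.inr ℝ ({j // act j} → ℝ) _).comp
            (LinearMap.inr ℝ (Fin s → ℝ) ({i // alph i} → ℝ))))) yα
      simp only [LinearMap.comp_apply, LinearMap.inl_apply, LinearMap.inr_apply,
        ← single_eq_ite', smul_eq_mul] at h
      exact h
    rw [h1, h2, h3, h4]
    ring
    -- evaluation of the base derivative map on coordinate directions
  have hzero0 : (fun i => σf i * (0 : Fin s → ℝ) i) = (0 : Fin s → ℝ) := by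
    funext i; simp
  have hAu : ∀ u : Fin n → ℝ, AMap DE DI DZ act alph σf (u, (0:Fin s → ℝ))
      = (DE (u, (0:Fin s → ℝ)), fun j' : {j // act j} => DI (u, (0:Fin s → ℝ)) j'.1,
          DZ (u, (0:Fin s → ℝ)), (0 : {i // alph i} → ℝ)) := by
    intro u
    rw [AMap_apply'', hzero0]
    refine Prod.ext rfl (Prod.ext rfl (Prod.ext ?_ ?_))
    · show DZ (u, (0:Fin s → ℝ)) - 0 = DZ (u, (0:Fin s → ℝ))
      simp
    · show (fun i : {i // alph i} => (0:Fin s → ℝ) i.1) = 0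
      funext i; rfl
  have hσsingle : ∀ i : Fin s, (fun k => σf k * (Pi.single i (1:ℝ) : Fin s → ℝ) k)
      = (Pi.single i (σf i) : Fin s → ℝ) := by
    intro i; funext k
    by_cases hk : k = i
    · subst hk; simp [Pi.single_apply]
    · simp [Pi.single_apply, hk]
  have hAw : ∀ i : Fin s, AMap DE DI DZ act alph σf ((0:Fin n → ℝ), Pi.single i 1)
      = (DE ((0:Fin n → ℝ), Pi.single i (σf i)),
          fun j' : {j // act j} => DI ((0:Fin n → ℝ), Pi.single i (σf i)) j'.1,
          DZ ((0:Fin n → ℝ), Pi.single i (σf i)) - Pi.single i 1,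
          fun i' : {i // alph i} => (Pi.single i (1:ℝ) : Fin s → ℝ) i'.1) := by
    intro i
    rw [AMap_apply'', hσsingle]
  have hsingle_smul : ∀ i : Fin s, (((0:Fin n → ℝ), (Pi.single i (σf i) : Fin s → ℝ)) :
      (Fin n → ℝ) × (Fin s → ℝ)) = σf i • ((0:Fin n → ℝ), (Pi.single i (1:ℝ) : Fin s → ℝ)) := by
    intro i
    refine Prod.ext (by simp) ?_
    show (Pi.single i (σf i) : Fin s → ℝ) = σf i • (Pi.single i (1:ℝ) : Fin s → ℝ)
    funext k
    by_cases hk : k = i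
    · subst hk; simp [Pi.single_apply]
    · simp [Pi.single_apply, hk]
  -- the t-direction stationarity
  have hTeq : ∀ jn : Fin n, fderiv ℝ f tstar (Pi.single jn 1)
      = (∑ k, DE ((Pi.single jn 1 : Fin n → ℝ), (0:Fin s → ℝ)) k * ξE k)
        + (∑ j' : {j // act j}, DI ((Pi.single jn 1 : Fin n → ℝ), (0:Fin s → ℝ)) j'.1 * ξI j')
        + (∑ i, DZ ((Pi.single jn 1 : Fin n → ℝ), (0:Fin s → ℝ)) i * ξZ i) := by
    intro jn
    have h := hstat ((Pi.single jn 1 : Fin n → ℝ), (0:Fin s → ℝ))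
    rw [hAu, hexp] at h
    have hφval : φd ((Pi.single jn 1 : Fin n → ℝ), (0:Fin s → ℝ))
        = fderiv ℝ f tstar (Pi.single jn 1) := rfl
    rw [hφval] at h
    simp only [Pi.zero_apply, zero_mul, Finset.sum_const_zero, add_zero] at h
    linarith [h]
  -- the z-direction stationarity
  have hZeq : ∀ i : Fin s,
      0 = σf i * ((∑ k, DE ((0:Fin n → ℝ), (Pi.single i 1 : Fin s → ℝ)) k * ξE k)
          + (∑ j' : {j // act j}, DI ((0:Fin n → ℝ), (Pi.single i 1 : Fin s → ℝ)) j'.1 * ξI j')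
          + (∑ l, DZ ((0:Fin n → ℝ), (Pi.single i 1 : Fin s → ℝ)) l * ξZ l))
        - ξZ i + (if hi : alph i then ξα ⟨i, hi⟩ else 0) := by
    intro i
    have h := hstat ((0:Fin n → ℝ), (Pi.single i 1 : Fin s → ℝ))
    rw [hAw, hexp] at h
    have hφ0 : φd ((0:Fin n → ℝ), (Pi.single i 1 : Fin s → ℝ)) = 0 := by
      show fderiv ℝ f tstar 0 = 0
      exact (fderiv ℝ f tstar).map_zero
    rw [hφ0] at h
    -- transform each sum
    have hE' : (∑ k, DE ((0:Fin n → ℝ), (Pi.single i (σf i) : Fin s → ℝ)) k * ξE k)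
        = σf i * ∑ k, DE ((0:Fin n → ℝ), (Pi.single i 1 : Fin s → ℝ)) k * ξE k := by
      rw [Finset.mul_sum]
      refine Finset.sum_congr rfl (fun k _ => ?_)
      rw [hsingle_smul i, _root_.map_smul]
      simp [mul_assoc]
    have hI' : (∑ j' : {j // act j}, DI ((0:Fin n → ℝ), (Pi.single i (σf i) : Fin s → ℝ)) j'.1 * ξI j')
        = σf i * ∑ j' : {j // act j}, DI ((0:Fin n → ℝ), (Pi.single i 1 : Fin s → ℝ)) j'.1 * ξI j' := by
      rw [Finset.mul_sum]
      refine Finset.sum_congr rfl (fun j' _ => ?_)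
      rw [hsingle_smul i, _root_.map_smul]
      simp [mul_assoc]
    have hZ' : (∑ l, (DZ ((0:Fin n → ℝ), (Pi.single i (σf i) : Fin s → ℝ)) - (Pi.single i 1 : Fin s → ℝ)) l * ξZ l)
        = σf i * (∑ l, DZ ((0:Fin n → ℝ), (Pi.single i 1 : Fin s → ℝ)) l * ξZ l) - ξZ i := by
      have : ∀ l, (DZ ((0:Fin n → ℝ), (Pi.single i (σf i) : Fin s → ℝ)) - (Pi.single i 1 : Fin s → ℝ)) l * ξZ l
          = DZ ((0:Fin n → ℝ), (Pi.single i (σf i) : Fin s → ℝ)) l * ξZ l - (Pi.single i 1 : Fin s → ℝ) l * ξZ l := by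
        intro l
        show (DZ _ l - _) * ξZ l = _
        ring
      rw [Finset.sum_congr rfl (fun l _ => this l), Finset.sum_sub_distrib, sum_single_mul,
        Finset.mul_sum]
      have h2 : (∑ l, DZ ((0:Fin n → ℝ), (Pi.single i (σf i) : Fin s → ℝ)) l * ξZ l)
          = ∑ l, σf i * (DZ ((0:Fin n → ℝ), (Pi.single i 1 : Fin s → ℝ)) l * ξZ l) := by
        refine Finset.sum_congr rfl (fun l _ => ?_)
        rw [hsingle_smul i, _root_.map_smul]
        simp [mul_assoc]
      rw [h2]
      ring
    have hα' : (∑ i' : {i // alph i}, (Pi.single i (1:ℝ) : Fin s → ℝ) i'.1 * ξα i')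
        = (if hi : alph i then ξα ⟨i, hi⟩ else 0) := by
      rw [sum_single_subtype]
      by_cases hi : alph i
      · rw [dif_pos hi, dif_pos hi, one_mul]
      · rw [dif_neg hi, dif_neg hi]
    rw [hE', hI', hZ', hα'] at h
    linarith [h]

    -- multipliers
  set lE : Fin m₁ → ℝ := fun k => -ξE k with hlEdef
  set lI : Fin m₂ → ℝ := fun j => if h : act j then ξI ⟨j, h⟩ else 0 with hlIdef
  set lZ : Fin s → ℝ := fun i => -ξZ i with hlZdef
  have hξαZ : ∀ (i : Fin s) (hi : alph i), ξα ⟨i, hi⟩ = ξZ i := by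
    intro i hi
    have h := hZeq i
    rw [dif_pos hi] at h
    have hσ0 : σf i = 0 := by
      show Real.sign (zstar i) = 0
      rw [(hi : zstar i = 0)]
      exact Real.sign_zero
    rw [hσ0] at h
    linarith [h]
  -- translation between matrix products with multipliers and the ξ-sums
  have hcombo : ∀ i : Fin s, (J2Eᵀ *ᵥ lE - J2Iᵀ *ᵥ lI + J2Zᵀ *ᵥ lZ) i
      = -((∑ k, DE ((0:Fin n → ℝ), (Pi.single i 1 : Fin s → ℝ)) k * ξE k)
        + (∑ j' : {j // act j}, DI ((0:Fin n → ℝ), (Pi.single i 1 : Fin s → ℝ)) j'.1 * ξI j')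
        + (∑ l, DZ ((0:Fin n → ℝ), (Pi.single i 1 : Fin s → ℝ)) l * ξZ l)) := by
    intro i
    simp only [Pi.add_apply, Pi.sub_apply]
    rw [transpose_mulVec_apply, transpose_mulVec_apply, transpose_mulVec_apply]
    have e1 : (∑ k, J2E k i * lE k)
        = -∑ k, DE ((0:Fin n → ℝ), (Pi.single i 1 : Fin s → ℝ)) k * ξE k := by
      rw [← Finset.sum_neg_distrib]
      refine Finset.sum_congr rfl (fun k _ => ?_)
      have hent : J2E k i = DE ((0:Fin n → ℝ), (Pi.single i 1 : Fin s → ℝ)) k := rfl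
      have hlEk : lE k = -ξE k := rfl
      rw [hent, hlEk]
      ring
    have e2 : (∑ k, J2I k i * lI k)
        = ∑ j' : {j // act j}, DI ((0:Fin n → ℝ), (Pi.single i 1 : Fin s → ℝ)) j'.1 * ξI j' := by
      have step : (∑ k, J2I k i * lI k)
          = ∑ k, J2I k i * (if h : act k then ξI ⟨k, h⟩ else 0) :=
        Finset.sum_congr rfl (fun k _ => rfl)
      rw [step, sum_mul_dite]
      exact Finset.sum_congr rfl (fun j' _ => rfl)
    have e3 : (∑ l, J2Z l i * lZ l)
        = -∑ l, DZ ((0:Fin n → ℝ), (Pi.single i 1 : Fin s → ℝ)) l * ξZ l := by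
      rw [← Finset.sum_neg_distrib]
      refine Finset.sum_congr rfl (fun l _ => ?_)
      have hent : J2Z l i = DZ ((0:Fin n → ℝ), (Pi.single i 1 : Fin s → ℝ)) l := rfl
      have hlZl : lZ l = -ξZ l := rfl
      rw [hent, hlZl]
      ring
    rw [e1, e2, e3]
    ring
  have hgrad : ∀ jn : Fin n, ((J1Eᵀ *ᵥ lE) jn - (J1Iᵀ *ᵥ lI) jn + (J1Zᵀ *ᵥ lZ) jn)
      = -((∑ k, DE ((Pi.single jn 1 : Fin n → ℝ), (0:Fin s → ℝ)) k * ξE k)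
        + (∑ j' : {j // act j}, DI ((Pi.single jn 1 : Fin n → ℝ), (0:Fin s → ℝ)) j'.1 * ξI j')
        + (∑ l, DZ ((Pi.single jn 1 : Fin n → ℝ), (0:Fin s → ℝ)) l * ξZ l)) := by
    intro jn
    rw [transpose_mulVec_apply, transpose_mulVec_apply, transpose_mulVec_apply]
    have e1 : (∑ k, J1E k jn * lE k)
        = -∑ k, DE ((Pi.single jn 1 : Fin n → ℝ), (0:Fin s → ℝ)) k * ξE k := by
      rw [← Finset.sum_neg_distrib]
      refine Finset.sum_congr rfl (fun k _ => ?_)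
      have hent : J1E k jn = DE ((Pi.single jn 1 : Fin n → ℝ), (0:Fin s → ℝ)) k := rfl
      have hlEk : lE k = -ξE k := rfl
      rw [hent, hlEk]
      ring
    have e2 : (∑ k, J1I k jn * lI k)
        = ∑ j' : {j // act j}, DI ((Pi.single jn 1 : Fin n → ℝ), (0:Fin s → ℝ)) j'.1 * ξI j' := by
      have step : (∑ k, J1I k jn * lI k)
          = ∑ k, J1I k jn * (if h : act k then ξI ⟨k, h⟩ else 0) :=
        Finset.sum_congr rfl (fun k _ => rfl)
      rw [step, sum_mul_dite]
      exact Finset.sum_congr rfl (fun j' _ => rfl)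
    have e3 : (∑ l, J1Z l jn * lZ l)
        = -∑ l, DZ ((Pi.single jn 1 : Fin n → ℝ), (0:Fin s → ℝ)) l * ξZ l := by
      rw [← Finset.sum_neg_distrib]
      refine Finset.sum_congr rfl (fun l _ => ?_)
      have hent : J1Z l jn = DZ ((Pi.single jn 1 : Fin n → ℝ), (0:Fin s → ℝ)) l := rfl
      have hlZl : lZ l = -ξZ l := rfl
      rw [hent, hlZl]
      ring
    rw [e1, e2, e3]
    ring
  -- the kink inequalities
  have hkink : ∀ (i : Fin s) (hi : alph i) (ε : ℝ), (ε = 1 ∨ ε = -1) →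
      0 ≤ ε * ξα ⟨i, hi⟩ - ((∑ k, DE ((0:Fin n → ℝ), (Pi.single i 1 : Fin s → ℝ)) k * ξE k)
        + (∑ j' : {j // act j}, DI ((0:Fin n → ℝ), (Pi.single i 1 : Fin s → ℝ)) j'.1 * ξI j')
        + (∑ l, DZ ((0:Fin n → ℝ), (Pi.single i 1 : Fin s → ℝ)) l * ξZ l)) := by
    intro i hi ε hε
    have hzi : zstar i = 0 := hi
    have hε1 : ε * ε = 1 := by rcases hε with h | h <;> rw [h] <;> norm_num
    set τ : Fin s → ℝ := Function.update σf i ε with hτdef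
    have hτabs : ∀ k, τ k * zstar k = |zstar k| := by
      intro k
      by_cases hk : k = i
      · subst hk
        rw [hτdef, Function.update_self, hzi]
        simp
      · rw [hτdef, Function.update_of_ne hk]
        exact hσabs k
    have hτσ : ∀ k, ¬ alph k → τ k = σf k := by
      intro k hk
      have hki : k ≠ i := fun h => hk (by rw [h]; exact hi)
      rw [hτdef, Function.update_of_ne hki]
    have hsurjτ : Function.Surjective (AMap DE DI DZ act alph τ) :=
      AMap_surj_transfer DE DI DZ act alph hτσ hsurj0
    obtain ⟨v, hv⟩ := hsurjτ ((0 : Fin m₁ → ℝ), (0 : {j // act j} → ℝ), (0 : Fin s → ℝ),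
      (Pi.single (⟨i, hi⟩ : {i // alph i}) ε : {i // alph i} → ℝ))
    have heα : ∀ c : ℝ, 0 ≤ c → ∀ i' : {i // alph i},
        τ i'.1 * (c * (Pi.single (⟨i, hi⟩ : {i // alph i}) ε : {i // alph i} → ℝ) i')
          = |c * (Pi.single (⟨i, hi⟩ : {i // alph i}) ε : {i // alph i} → ℝ) i'| := by
      intro c hc i'
      by_cases hii : i' = ⟨i, hi⟩
      · rw [hii]
        have h1 : (Pi.single (⟨i, hi⟩ : {i // alph i}) ε : {i // alph i} → ℝ) ⟨i, hi⟩ = ε := by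
          simp [Pi.single_apply]
        rw [h1]
        have h2 : τ i = ε := by rw [hτdef]; exact Function.update_self i ε σf
        rw [h2]
        have h3 : ε * (c * ε) = c := by rw [mul_comm c ε, ← mul_assoc, hε1]; ring
        rw [h3]
        have h4 : |c * ε| = c := by
          rw [abs_mul, abs_of_nonneg hc]
          rcases hε with h | h <;> rw [h] <;> simp
        rw [h4]
      · have h1 : (Pi.single (⟨i, hi⟩ : {i // alph i}) ε : {i // alph i} → ℝ) i' = 0 := by
          simp [Pi.single_apply, hii]
        rw [h1]
        simp
    have h0 : 0 ≤ φd v := by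
      refine harc τ hτabs 0 (Pi.single ⟨i, hi⟩ ε) (fun j => le_rfl) heα v ?_ hsurjτ
      rw [hv]
    have hvα : (fun i' : {i // alph i} => v.2 i'.1)
        = (Pi.single (⟨i, hi⟩ : {i // alph i}) ε : {i // alph i} → ℝ) := by
      have h := congrArg (fun y => y.2.2.2) hv
      simpa [AMap_apply] using h
    have hemb : embA alph (fun k => τ k - σf k)
        (Pi.single (⟨i, hi⟩ : {i // alph i}) ε) = (Pi.single i 1 : Fin s → ℝ) := by
      funext k
      by_cases hk : alph k
      · by_cases hki : k = i
        · subst hki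
          have hσ0 : σf k = 0 := by
            show Real.sign (zstar k) = 0
            rw [(hk : zstar k = 0)]
            exact Real.sign_zero
          have hτk : τ k = ε := by rw [hτdef]; exact Function.update_self k ε σf
          have h1 : (Pi.single (⟨k, hk⟩ : {i // alph i}) ε : {i // alph i} → ℝ) ⟨k, hk⟩ = ε := by
            simp [Pi.single_apply]
          show (if h : alph k then (τ k - σf k) *
            (Pi.single (⟨k, hi⟩ : {i // alph i}) ε : {i // alph i} → ℝ) ⟨k, h⟩ else 0)
              = (Pi.single k 1 : Fin s → ℝ) k
          rw [dif_pos hk]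
          have h2 : (Pi.single (⟨k, hi⟩ : {i // alph i}) ε : {i // alph i} → ℝ) ⟨k, hk⟩ = ε := by
            simp [Pi.single_apply]
          rw [h2, hτk, hσ0]
          simp [Pi.single_apply, hε1]
        · show (if h : alph k then (τ k - σf k) *
            (Pi.single (⟨i, hi⟩ : {i // alph i}) ε : {i // alph i} → ℝ) ⟨k, h⟩ else 0)
              = (Pi.single i 1 : Fin s → ℝ) k
          rw [dif_pos hk]
          have h1 : (Pi.single (⟨i, hi⟩ : {i // alph i}) ε : {i // alph i} → ℝ) ⟨k, hk⟩ = 0 := by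
            have : (⟨k, hk⟩ : {i // alph i}) ≠ ⟨i, hi⟩ := fun h => hki (congrArg Subtype.val h)
            simp [Pi.single_apply, this]
          rw [h1, mul_zero]
          simp [Pi.single_apply, Ne.symm hki]
      · show (if h : alph k then (τ k - σf k) *
          (Pi.single (⟨i, hi⟩ : {i // alph i}) ε : {i // alph i} → ℝ) ⟨k, h⟩ else 0)
            = (Pi.single i 1 : Fin s → ℝ) k
        rw [dif_neg hk]
        have hki : k ≠ i := fun h => hk (by rw [h]; exact hi)
        simp [Pi.single_apply, Ne.symm hki]
    have hdiff := AMap_diff DE DI DZ act alph hτσ v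
    have hAσv : AMap DE DI DZ act alph σf v
        = ((0 : Fin m₁ → ℝ), (0 : {j // act j} → ℝ), (0 : Fin s → ℝ),
            (Pi.single (⟨i, hi⟩ : {i // alph i}) ε : {i // alph i} → ℝ))
          - NcorrMap DE DI DZ act alph (fun k => τ k - σf k)
              (Pi.single (⟨i, hi⟩ : {i // alph i}) ε) := by
      rw [← hv, hdiff, hvα]
      abel
    have hξv := hstat v
    rw [hAσv, map_sub] at hξv
    have hξe : ξ ((0 : Fin m₁ → ℝ), (0 : {j // act j} → ℝ), (0 : Fin s → ℝ),
        (Pi.single (⟨i, hi⟩ : {i // alph i}) ε : {i // alph i} → ℝ)) = ε * ξα ⟨i, hi⟩ := by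
      rw [hexp, sum_single_mul]
      simp
    have hξN : ξ (NcorrMap DE DI DZ act alph (fun k => τ k - σf k)
        (Pi.single (⟨i, hi⟩ : {i // alph i}) ε))
        = (∑ k, DE ((0:Fin n → ℝ), (Pi.single i 1 : Fin s → ℝ)) k * ξE k)
          + (∑ j' : {j // act j}, DI ((0:Fin n → ℝ), (Pi.single i 1 : Fin s → ℝ)) j'.1 * ξI j')
          + (∑ l, DZ ((0:Fin n → ℝ), (Pi.single i 1 : Fin s → ℝ)) l * ξZ l) := by
      show ξ (DE ((0:Fin n → ℝ), embA alph (fun k => τ k - σf k)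
          (Pi.single (⟨i, hi⟩ : {i // alph i}) ε)),
        fun j' : {j // act j} => DI ((0:Fin n → ℝ), embA alph (fun k => τ k - σf k)
          (Pi.single (⟨i, hi⟩ : {i // alph i}) ε)) j'.1,
        DZ ((0:Fin n → ℝ), embA alph (fun k => τ k - σf k)
          (Pi.single (⟨i, hi⟩ : {i // alph i}) ε)), 0) = _
      rw [hemb, hexp]
      simp
    rw [hξv, hξe, hξN] at h0
    linarith [h0]
  -- final assembly
  refine ⟨lE, lI, lZ, ?_, ?_, ?_, ?_, ?_⟩
  · funext jn
    simp only [Pi.add_apply, Pi.sub_apply, Pi.zero_apply]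
    have h1 := hTeq jn
    have h2 := hgrad jn
    linarith [h1, h2]
  · intro i hzi
    have hi : alph i := hzi
    have hZa := hξαZ i hi
    have hc := hcombo i
    have hk1 := hkink i hi 1 (Or.inl rfl)
    have hk2 := hkink i hi (-1) (Or.inr rfl)
    have hlZi : lZ i = -ξZ i := rfl
    rw [abs_le]
    constructor
    · rw [hlZi]
      rw [hc]
      linarith [hk1, hZa]
    · rw [hlZi]
      rw [hc]
      linarith [hk2, hZa]
  · intro i hzi
    have hσne : σf i * σf i = 1 := sign_sq hzi
    have h := hZeq i
    have hni : ¬ alph i := hzi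
    rw [dif_neg hni] at h
    have hc := hcombo i
    have hσi : Real.sign (zstar i) = σf i := rfl
    rw [hσi]
    have hlZi : lZ i = -ξZ i := rfl
    set S := (∑ k, DE ((0:Fin n → ℝ), (Pi.single i 1 : Fin s → ℝ)) k * ξE k)
        + (∑ j' : {j // act j}, DI ((0:Fin n → ℝ), (Pi.single i 1 : Fin s → ℝ)) j'.1 * ξI j')
        + (∑ l, DZ ((0:Fin n → ℝ), (Pi.single i 1 : Fin s → ℝ)) l * ξZ l) with hSdef
    rw [hc, hlZi]
    have hS : ξZ i = σf i * S := by linarith [h]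
    rw [hS]
    linear_combination S * hσne
  · intro j
    by_cases hj : act j
    · have hlIj : lI j = ξI ⟨j, hj⟩ := by
        show (if h : act j then ξI ⟨j, h⟩ else 0) = ξI ⟨j, hj⟩
        rw [dif_pos hj]
      rw [hlIj]
      obtain ⟨v, hv⟩ := hsurj0 ((0 : Fin m₁ → ℝ),
        (Pi.single (⟨j, hj⟩ : {j // act j}) 1 : {j // act j} → ℝ), (0 : Fin s → ℝ),
        (0 : {i // alph i} → ℝ))
      have heI : ∀ j' : {j // act j},
          0 ≤ (Pi.single (⟨j, hj⟩ : {j // act j}) 1 : {j // act j} → ℝ) j' := by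
        intro j'
        by_cases h : j' = ⟨j, hj⟩
        · rw [h]; simp [Pi.single_apply]
        · simp [Pi.single_apply, h]
      have h0 : 0 ≤ φd v := by
        refine harc σf hσabs (Pi.single ⟨j, hj⟩ 1) 0 heI (fun c hc i' => by simp) v ?_ hsurj0
        rw [hv]
      have hval := hstat v
      rw [hv, hexp, sum_single_mul] at hval
      simp only [Pi.zero_apply, zero_mul, Finset.sum_const_zero, add_zero, zero_add, one_mul] at hval
      linarith [h0, hval.symm.le, hval.le]
    · have hlIj : lI j = 0 := by
        show (if h : act j then ξI ⟨j, h⟩ else 0) = 0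
        rw [dif_neg hj]
      rw [hlIj]
  · show ∑ j, lI j * cI pstar j = 0
    apply Finset.sum_eq_zero
    intro j _
    by_cases hj : act j
    · rw [(hj : cI pstar j = 0), mul_zero]
    · have hlIj : lI j = 0 := by
        show (if h : act j then ξI ⟨j, h⟩ else 0) = 0
        rw [dif_neg hj]
      rw [hlIj, zero_mul]

end
end
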